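/- arXiv:2406.15532 — 5 statements merged into one kernel-verified Lean document; each statement's English description precedes it below -/
import Mathlib

section
/- Let G be a nontrivial additive subgroup of ℂ and let · be a transposed Poisson structure on the deformed generalized Heisenberg–Virasoro algebra g(G,−1). Then there exists β ∈ ℂ such that I_0 · I_0 = β C_L and the product of every other pair of basis elements is zero; i.e., L_a · L_b = 0, L_a · I_b = 0, L_a · C_L = 0, I_a · C_L = 0, C_L · C_L = 0 for all a, b ∈ G, and I_a · I_b = 0 unless a = b = 0. -/
open scoped Classical

/-- Index set for the basis of the deformed generalized Heisenberg–Virasoro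
algebra `g(G, -1)`: vectors `L a`, `I a` for `a ∈ G` together with the
central element `C_L`. -/
inductive DGHVIdx (G : AddSubgroup ℂ) : Type
  | L : G → DGHVIdx G
  | I : G → DGHVIdx G
  | CL : DGHVIdx G

namespace DGHVAux

section
variable {Lg : Type*} [LieRing Lg] [LieAlgebra ℂ Lg] {ι : Type*} (bas : Module.Basis ι ℂ Lg)

noncomputable def coordf (i : ι) : Lg →ₗ[ℂ] ℂ :=
  (Finsupp.lapply i).comp bas.repr.toLinearMap

@[simp] lemma coordf_apply (i : ι) (u : Lg) : coordf bas i u = bas.repr u i := rfl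

lemma lie_coord_eq (c : Lg) (i k : ι) (e : ℂ)
    (h : ∀ j, bas.repr ⁅c, bas j⁆ i = e * bas.repr (bas j) k) :
    ∀ u, bas.repr ⁅c, u⁆ i = e * bas.repr u k := by
  intro u
  have key : (coordf bas i).comp (LieAlgebra.ad ℂ Lg c) = e • coordf bas k := by
    apply Module.Basis.ext bas
    intro j
    simpa using h j
  have := LinearMap.congr_fun key u
  simpa using this

lemma lie_coord_zero (c : Lg) (i : ι)
    (h : ∀ j, bas.repr ⁅c, bas j⁆ i = 0) :
    ∀ u, bas.repr ⁅c, u⁆ i = 0 := by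
  intro u
  have := lie_coord_eq bas c i i 0 (fun j => by rw [h j]; ring) u
  simpa using this

end

section
variable {G : AddSubgroup ℂ} {Lg : Type*} [LieRing Lg] [LieAlgebra ℂ Lg]
  (bas : Module.Basis (DGHVIdx G) ℂ Lg)
  (hLL : ∀ a b : G, ⁅bas (DGHVIdx.L a), bas (DGHVIdx.L b)⁆ =
      ((b : ℂ) - (a : ℂ)) • bas (DGHVIdx.L (a + b)) +
        (if a + b = 0 then ((a : ℂ) ^ 3 - (a : ℂ)) / 12 else 0) • bas DGHVIdx.CL)
  (hLI : ∀ a b : G, ⁅bas (DGHVIdx.L a), bas (DGHVIdx.I b)⁆ =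
      ((a : ℂ) + (b : ℂ)) • bas (DGHVIdx.I (a + b)))
  (hII : ∀ a b : G, ⁅bas (DGHVIdx.I a), bas (DGHVIdx.I b)⁆ = 0)
  (hCL : ∀ x : Lg, ⁅bas DGHVIdx.CL, x⁆ = 0)

include hLL hLI hCL in
lemma HLa (b i' : G) (u : Lg) :
    bas.repr ⁅bas (.L b), u⁆ (.L i') = ((i' : ℂ) - 2*(b:ℂ)) * bas.repr u (.L (i' - b)) := by
  refine lie_coord_eq bas _ _ _ _ (fun j => ?_) u
  cases j with
  | L c =>
      rw [hLL b c]
      simp only [map_add, map_smul, Module.Basis.repr_self, Finsupp.single_apply,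
        Finsupp.add_apply, Finsupp.smul_apply, smul_eq_mul,
        DGHVIdx.L.injEq]
      by_cases hc : c = i' - b
      · subst hc
        have h1 : b + (i' - b) = i' := by abel
        simp only [h1, if_pos rfl]
        simp only [show (DGHVIdx.CL = DGHVIdx.L i') = False from by simp, if_false]
        push_cast
        ring
      · have h2 : ¬(b + c = i') := fun h => hc (by rw [← h]; abel)
        simp [hc, h2]
  | I c =>
      rw [hLI b c]
      simp
  | CL =>
      rw [← lie_skew, hCL]
      simp

include hLL hLI hCL in
lemma HLb (b i' : G) (u : Lg) :
    bas.repr ⁅bas (.L b), u⁆ (.I i') = (i' : ℂ) * bas.repr u (.I (i' - b)) := by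
  refine lie_coord_eq bas _ _ _ _ (fun j => ?_) u
  cases j with
  | L c =>
      rw [hLL b c]
      split_ifs <;> simp
  | I c =>
      rw [hLI b c]
      simp only [map_smul, Module.Basis.repr_self, Finsupp.single_apply,
        Finsupp.smul_apply, smul_eq_mul, DGHVIdx.I.injEq]
      by_cases hc : c = i' - b
      · subst hc
        have h1 : b + (i' - b) = i' := by abel
        simp only [h1, if_pos rfl]
        push_cast
        ring
      · have h2 : ¬(b + c = i') := fun h => hc (by rw [← h]; abel)
        simp [hc, h2]
  | CL =>
      rw [← lie_skew, hCL]
      simp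

include hLL hLI hCL in
lemma HLc (b : G) (u : Lg) :
    bas.repr ⁅bas (.L b), u⁆ .CL = (((b:ℂ)^3 - (b:ℂ))/12) * bas.repr u (.L (-b)) := by
  refine lie_coord_eq bas _ _ _ _ (fun j => ?_) u
  cases j with
  | L c =>
      rw [hLL b c]
      simp only [map_add, map_smul, Module.Basis.repr_self, Finsupp.single_apply,
        Finsupp.add_apply, Finsupp.smul_apply, smul_eq_mul]
      by_cases hc : c = -b
      · subst hc
        have h1 : b + -b = (0 : G) := by abel
        simp [h1]
      · have h2 : ¬(b + c = 0) := fun h => hc (by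
          have := h; rw [add_comm] at this
          exact eq_neg_of_add_eq_zero_left this)
        simp [hc, h2]
  | I c =>
      rw [hLI b c]
      simp
  | CL =>
      rw [← lie_skew, hCL]
      simp

include hLI hII hCL in
lemma HIb (b i' : G) (u : Lg) :
    bas.repr ⁅bas (.I b), u⁆ (.I i') = (-(i' : ℂ)) * bas.repr u (.L (i' - b)) := by
  refine lie_coord_eq bas _ _ _ _ (fun j => ?_) u
  cases j with
  | L c =>
      rw [← lie_skew, hLI c b]
      simp only [map_neg, map_smul, Module.Basis.repr_self, Finsupp.single_apply,
        Finsupp.neg_apply, Finsupp.smul_apply, smul_eq_mul, DGHVIdx.I.injEq]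
      by_cases hc : c = i' - b
      · subst hc
        have h1 : (i' - b) + b = i' := by abel
        simp only [h1, if_pos rfl]
        push_cast
        ring
      · have h2 : ¬(c + b = i') := fun h => hc (by rw [← h]; abel)
        simp [hc, h2]
  | I c =>
      rw [hII b c]
      simp
  | CL =>
      rw [← lie_skew, hCL]
      simp

include hLI hII hCL in
lemma HIa0 (b : G) (i' : G) (u : Lg) :
    bas.repr ⁅bas (.I b), u⁆ (.L i') = 0 := by
  refine lie_coord_zero bas _ _ (fun j => ?_) u
  cases j with
  | L c => rw [← lie_skew, hLI c b]; simp
  | I c => rw [hII b c]; simp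
  | CL => rw [← lie_skew, hCL]; simp

include hLI hII hCL in
lemma HIc0 (b : G) (u : Lg) :
    bas.repr ⁅bas (.I b), u⁆ .CL = 0 := by
  refine lie_coord_zero bas _ _ (fun j => ?_) u
  cases j with
  | L c => rw [← lie_skew, hLI c b]; simp
  | I c => rw [hII b c]; simp
  | CL => rw [← lie_skew, hCL]; simp

end
end DGHVAux

set_option maxHeartbeats 2000000 in
/-- every transposed Poisson structure on `g(G, -1)` is given by
`I_0 · I_0 = β C_L` for some `β ∈ ℂ`, all other products of basis vectors
being zero. -/
theorem transposedPoisson_dgHV_neg_one_classification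
    (G : AddSubgroup ℂ) [Nontrivial G]
    (Lg : Type*) [LieRing Lg] [LieAlgebra ℂ Lg]
    (bas : Module.Basis (DGHVIdx G) ℂ Lg)
    (hLL : ∀ a b : G, ⁅bas (DGHVIdx.L a), bas (DGHVIdx.L b)⁆ =
      ((b : ℂ) - (a : ℂ)) • bas (DGHVIdx.L (a + b)) +
        (if a + b = 0 then ((a : ℂ) ^ 3 - (a : ℂ)) / 12 else 0) • bas DGHVIdx.CL)
    (hLI : ∀ a b : G, ⁅bas (DGHVIdx.L a), bas (DGHVIdx.I b)⁆ =
      ((a : ℂ) + (b : ℂ)) • bas (DGHVIdx.I (a + b)))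
    (hII : ∀ a b : G, ⁅bas (DGHVIdx.I a), bas (DGHVIdx.I b)⁆ = 0)
    (hCL : ∀ x : Lg, ⁅bas DGHVIdx.CL, x⁆ = 0)
    (mul : Lg →ₗ[ℂ] Lg →ₗ[ℂ] Lg)
    (hcomm : ∀ x y : Lg, mul x y = mul y x)
    (hassoc : ∀ x y z : Lg, mul (mul x y) z = mul x (mul y z))
    (hcompat : ∀ x y z : Lg,
      (2 : ℂ) • mul z ⁅x, y⁆ = ⁅mul z x, y⁆ + ⁅x, mul z y⁆) :
    ∃ β : ℂ,
      mul (bas (DGHVIdx.I 0)) (bas (DGHVIdx.I 0)) = β • bas DGHVIdx.CL ∧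
      (∀ a b : G, mul (bas (DGHVIdx.L a)) (bas (DGHVIdx.L b)) = 0) ∧
      (∀ a b : G, mul (bas (DGHVIdx.L a)) (bas (DGHVIdx.I b)) = 0) ∧
      (∀ a : G, mul (bas (DGHVIdx.L a)) (bas DGHVIdx.CL) = 0) ∧
      (∀ a : G, mul (bas (DGHVIdx.I a)) (bas DGHVIdx.CL) = 0) ∧
      mul (bas DGHVIdx.CL) (bas DGHVIdx.CL) = 0 ∧
      (∀ a b : G, ¬(a = 0 ∧ b = 0) →
        mul (bas (DGHVIdx.I a)) (bas (DGHVIdx.I b)) = 0) := by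

  obtain ⟨g, hg⟩ := exists_ne (0 : G)
  have hLa := DGHVAux.HLa bas hLL hLI hCL
  have hLb := DGHVAux.HLb bas hLL hLI hCL
  have hLc := DGHVAux.HLc bas hLL hLI hCL
  have hIb' := DGHVAux.HIb bas hLI hII hCL
  have hIa0 := DGHVAux.HIa0 bas hLI hII hCL
  have hIc0 := DGHVAux.HIc0 bas hLI hII hCL
  have cne : ∀ a : G, a ≠ 0 → (a:ℂ) ≠ 0 := fun a h hh => h (by exact_mod_cast Subtype.ext hh)
  have hsk : ∀ (u v : Lg) i, bas.repr ⁅u, v⁆ i = - bas.repr ⁅v, u⁆ i := by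
    intro u v i; rw [← lie_skew u v]; simp only [map_neg, Finsupp.neg_apply]
  have hcp : ∀ x y z : Lg, ∀ i, 2 * bas.repr (mul z ⁅x,y⁆) i
      = bas.repr ⁅mul z x, y⁆ i + bas.repr ⁅x, mul z y⁆ i := by
    intro x y z i
    have h := congrArg (fun v => bas.repr v i) (hcompat x y z)
    simpa using h
  have hbLL0 : ∀ b : G, ⁅bas (.L 0), bas (.L b)⁆ = (b:ℂ) • bas (.L b) := by
    intro b; rw [hLL 0 b]; simp
  have hbLI0 : ∀ b : G, ⁅bas (.L 0), bas (.I b)⁆ = (b:ℂ) • bas (.I b) := by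
    intro b; rw [hLI 0 b]; simp
  have hPL : ∀ (z : Lg) (b : G) (i : DGHVIdx G),
      2 * ((b:ℂ) * bas.repr (mul z (bas (.L b))) i)
      = bas.repr ⁅mul z (bas (.L 0)), bas (.L b)⁆ i
        + bas.repr ⁅bas (.L 0), mul z (bas (.L b))⁆ i := by
    intro z b i
    have h := hcp (bas (.L 0)) (bas (.L b)) z i
    rw [hbLL0 b] at h
    simpa using h
  have hPI : ∀ (z : Lg) (b : G) (i : DGHVIdx G),
      2 * ((b:ℂ) * bas.repr (mul z (bas (.I b))) i)
      = bas.repr ⁅mul z (bas (.L 0)), bas (.I b)⁆ i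
        + bas.repr ⁅bas (.L 0), mul z (bas (.I b))⁆ i := by
    intro z b i
    have h := hcp (bas (.L 0)) (bas (.I b)) z i
    rw [hbLI0 b] at h
    simpa using h
  have hbb2 : ∀ b : G, b ≠ 0 → ((b:ℂ)+b) ≠ 0 := by
    intro b hb hh
    apply cne b hb
    have h2 : (2:ℂ) * b = 0 := by linear_combination hh
    rcases mul_eq_zero.mp h2 with h4 | h4
    · norm_num at h4
    · exact h4
  have hQ2 : ∀ (z : Lg) (b : G), b ≠ 0 → bas.repr (mul z (bas (.L 0))) (.L b) = 0 := by
    intro z b hb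
    have h := hPI z b (.I (b+b))
    rw [hsk (mul z (bas (.L 0))) (bas (.I b)) (.I (b+b)), hIb' b (b+b) (mul z (bas (.L 0))),
        hLb 0 (b+b) (mul z (bas (.I b)))] at h
    have e1 : b + b - b = b := by abel
    have e2 : b + b - 0 = b + b := by abel
    rw [e1, e2] at h
    push_cast at h
    have h2 : ((b:ℂ)+b) * bas.repr (mul z (bas (.L 0))) (.L b) = 0 := by
      linear_combination -h
    exact (mul_eq_zero.mp h2).resolve_left (hbb2 b hb)
  have hQ1 : ∀ (z : Lg) (b : G), b ≠ 0 → bas.repr (mul z (bas (.L 0))) (.I b) = 0 := by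
    intro z b hb
    have h := hPL z b (.I (b+b))
    rw [hsk (mul z (bas (.L 0))) (bas (.L b)) (.I (b+b)), hLb b (b+b) (mul z (bas (.L 0))),
        hLb 0 (b+b) (mul z (bas (.L b)))] at h
    have e1 : b + b - b = b := by abel
    have e2 : b + b - 0 = b + b := by abel
    rw [e1, e2] at h
    push_cast at h
    have h2 : ((b:ℂ)+b) * bas.repr (mul z (bas (.L 0))) (.I b) = 0 := by
      linear_combination h
    exact (mul_eq_zero.mp h2).resolve_left (hbb2 b hb)
  have hfact : ∀ x y : ℂ, x ≠ 0 → x * y = 0 → y = 0 :=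
    fun x y hx h => (mul_eq_zero.mp h).resolve_left hx
  have hsubne : ∀ x y : G, (x:ℂ) ≠ (y:ℂ) → x - y ≠ 0 := by
    intro x y h hh
    apply h
    have h2 := congrArg (fun t : G => (t:ℂ)) hh
    push_cast at h2
    linear_combination h2
  have hML_Lb : ∀ (z : Lg) (b : G), b ≠ 0 →
      bas.repr (mul z (bas (.L b))) (.L b) = bas.repr (mul z (bas (.L 0))) (.L 0) := by
    intro z b hb
    have h := hPL z b (.L b)
    rw [hsk (mul z (bas (.L 0))) (bas (.L b)) (.L b), hLa b b (mul z (bas (.L 0))),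
        hLa 0 b (mul z (bas (.L b))), sub_self, sub_zero] at h
    push_cast at h
    exact sub_eq_zero.mp (hfact _ _ (cne b hb) (by linear_combination h))
  have hML_Ib : ∀ (z : Lg) (b : G), b ≠ 0 →
      bas.repr (mul z (bas (.L b))) (.I b) = -(bas.repr (mul z (bas (.L 0))) (.I 0)) := by
    intro z b hb
    have h := hPL z b (.I b)
    rw [hsk (mul z (bas (.L 0))) (bas (.L b)) (.I b), hLb b b (mul z (bas (.L 0))),
        hLb 0 b (mul z (bas (.L b))), sub_self, sub_zero] at h
    push_cast at h
    have h2 := hfact _ _ (cne b hb)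
      (show (b:ℂ) * (bas.repr (mul z (bas (.L b))) (.I b)
        + bas.repr (mul z (bas (.L 0))) (.I 0)) = 0 by linear_combination h)
    linear_combination h2
  have hML_Lne : ∀ (z : Lg) (b i' : G), b ≠ 0 → (i':ℂ) ≠ (b:ℂ) → (i':ℂ) ≠ (b:ℂ)+(b:ℂ) →
      bas.repr (mul z (bas (.L b))) (.L i') = 0 := by
    intro z b i' hb h1 h2
    have h := hPL z b (.L i')
    rw [hsk (mul z (bas (.L 0))) (bas (.L b)) (.L i'), hLa b i' (mul z (bas (.L 0))),
        hLa 0 i' (mul z (bas (.L b))), sub_zero,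
        hQ2 z (i' - b) (hsubne i' b h1)] at h
    push_cast at h
    have h3 : ((b:ℂ) + b - i') ≠ 0 := fun hh => h2 (by linear_combination -hh)
    exact hfact _ _ h3 (by linear_combination h)
  have hML_Ine : ∀ (z : Lg) (b i' : G), b ≠ 0 → (i':ℂ) ≠ (b:ℂ) → (i':ℂ) ≠ (b:ℂ)+(b:ℂ) →
      bas.repr (mul z (bas (.L b))) (.I i') = 0 := by
    intro z b i' hb h1 h2
    have h := hPL z b (.I i')
    rw [hsk (mul z (bas (.L 0))) (bas (.L b)) (.I i'), hLb b i' (mul z (bas (.L 0))),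
        hLb 0 i' (mul z (bas (.L b))), sub_zero,
        hQ1 z (i' - b) (hsubne i' b h1)] at h
    push_cast at h
    have h3 : ((b:ℂ) + b - i') ≠ 0 := fun hh => h2 (by linear_combination -hh)
    exact hfact _ _ h3 (by linear_combination h)
  have hML_CL : ∀ (z : Lg) (b : G), b ≠ 0 →
      bas.repr (mul z (bas (.L b))) .CL = 0 := by
    intro z b hb
    have h := hPL z b .CL
    rw [hsk (mul z (bas (.L 0))) (bas (.L b)) .CL, hLc b (mul z (bas (.L 0))),
        hLc 0 (mul z (bas (.L b))),
        hQ2 z (-b) (fun hh => hb (by simpa using congrArg Neg.neg hh))] at h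
    push_cast at h
    have h3 : ((b:ℂ) + b) ≠ 0 := hbb2 b hb
    exact hfact _ _ h3 (by linear_combination h)
  have hGneg : ∀ b : G, b ≠ 0 → -b ≠ 0 := fun b hb hh => hb (neg_eq_zero.mp hh)
  have hGbb : ∀ b : G, b ≠ 0 → b + b ≠ 0 := by
    intro b hb hh
    apply hbb2 b hb
    have h2 := congrArg (fun t : G => (t:ℂ)) hh
    push_cast at h2
    linear_combination h2
  have hbr3 : ∀ b : G, b ≠ 0 → ⁅bas (.L (b+b)), bas (.L (-b))⁆ = (-3*(b:ℂ)) • bas (.L b) := by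
    intro b hb
    rw [hLL (b+b) (-b)]
    have e : (b+b) + (-b) = b := by abel
    rw [e, if_neg hb]
    simp only [zero_smul, add_zero]
    congr 1
    push_cast
    ring
  have hML_L2b : ∀ (z : Lg) (b : G), b ≠ 0 →
      bas.repr (mul z (bas (.L b))) (.L (b+b)) = 0 := by
    intro z b hb
    have h := hcp (bas (.L (b+b))) (bas (.L (-b))) z (.L (b+b))
    rw [hbr3 b hb] at h
    simp only [map_smul, Finsupp.smul_apply, smul_eq_mul] at h
    rw [hsk (mul z (bas (.L (b+b)))) (bas (.L (-b))) (.L (b+b)),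
        hLa (-b) (b+b) (mul z (bas (.L (b+b)))),
        show (b+b) - (-b) = b+b+b from by abel,
        hML_Lne z (b+b) (b+b+b) (hGbb b hb)
          (by push_cast; intro hh; exact cne b hb (by linear_combination hh))
          (by push_cast; intro hh; exact cne b hb (by linear_combination -hh)),
        hLa (b+b) (b+b) (mul z (bas (.L (-b)))), sub_self,
        hML_Lne z (-b) 0 (hGneg b hb)
          (by push_cast; intro hh; exact cne b hb (by linear_combination hh))
          (by push_cast; intro hh; exact cne b hb (by linear_combination hh/2))] at h
    push_cast at h
    have h6 : (6:ℂ)*(b:ℂ) ≠ 0 := mul_ne_zero (by norm_num) (cne b hb)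
    exact hfact _ _ h6 (by linear_combination -h)
  have hML_I2b : ∀ (z : Lg) (b : G), b ≠ 0 →
      bas.repr (mul z (bas (.L b))) (.I (b+b)) = 0 := by
    intro z b hb
    have h := hcp (bas (.L (b+b))) (bas (.L (-b))) z (.I (b+b))
    rw [hbr3 b hb] at h
    simp only [map_smul, Finsupp.smul_apply, smul_eq_mul] at h
    rw [hsk (mul z (bas (.L (b+b)))) (bas (.L (-b))) (.I (b+b)),
        hLb (-b) (b+b) (mul z (bas (.L (b+b)))),
        show (b+b) - (-b) = b+b+b from by abel,
        hML_Ine z (b+b) (b+b+b) (hGbb b hb)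
          (by push_cast; intro hh; exact cne b hb (by linear_combination hh))
          (by push_cast; intro hh; exact cne b hb (by linear_combination -hh)),
        hLb (b+b) (b+b) (mul z (bas (.L (-b)))), sub_self,
        hML_Ine z (-b) 0 (hGneg b hb)
          (by push_cast; intro hh; exact cne b hb (by linear_combination hh))
          (by push_cast; intro hh; exact cne b hb (by linear_combination hh/2))] at h
    push_cast at h
    have h6 : (6:ℂ)*(b:ℂ) ≠ 0 := mul_ne_zero (by norm_num) (cne b hb)
    exact hfact _ _ h6 (by linear_combination -h)
  have hMI_Ib : ∀ (z : Lg) (b : G), b ≠ 0 →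
      bas.repr (mul z (bas (.I b))) (.I b) = bas.repr (mul z (bas (.L 0))) (.L 0) := by
    intro z b hb
    have h := hPI z b (.I b)
    rw [hsk (mul z (bas (.L 0))) (bas (.I b)) (.I b), hIb' b b (mul z (bas (.L 0))),
        sub_self, hLb 0 b (mul z (bas (.I b))), sub_zero] at h
    exact sub_eq_zero.mp (hfact _ _ (cne b hb) (by linear_combination h))
  have hMI_Ine : ∀ (z : Lg) (b i' : G), b ≠ 0 → (i':ℂ) ≠ (b:ℂ) → (i':ℂ) ≠ (b:ℂ)+(b:ℂ) →
      bas.repr (mul z (bas (.I b))) (.I i') = 0 := by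
    intro z b i' hb h1 h2
    have h := hPI z b (.I i')
    rw [hsk (mul z (bas (.L 0))) (bas (.I b)) (.I i'), hIb' b i' (mul z (bas (.L 0))),
        hQ2 z (i' - b) (hsubne i' b h1), hLb 0 i' (mul z (bas (.I b))), sub_zero] at h
    have h3 : ((b:ℂ) + b - i') ≠ 0 := fun hh => h2 (by linear_combination -hh)
    exact hfact _ _ h3 (by linear_combination h)
  have hMI_Lne : ∀ (z : Lg) (b i' : G), b ≠ 0 → (i':ℂ) ≠ (b:ℂ)+(b:ℂ) →
      bas.repr (mul z (bas (.I b))) (.L i') = 0 := by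
    intro z b i' hb h2
    have h := hPI z b (.L i')
    rw [hsk (mul z (bas (.L 0))) (bas (.I b)) (.L i'), hIa0 b i' (mul z (bas (.L 0))),
        hLa 0 i' (mul z (bas (.I b))), sub_zero] at h
    push_cast at h
    have h3 : ((b:ℂ) + b - i') ≠ 0 := fun hh => h2 (by linear_combination -hh)
    exact hfact _ _ h3 (by linear_combination h)
  have hMI_CL : ∀ (z : Lg) (b : G), b ≠ 0 →
      bas.repr (mul z (bas (.I b))) .CL = 0 := by
    intro z b hb
    have h := hPI z b .CL
    rw [hsk (mul z (bas (.L 0))) (bas (.I b)) .CL, hIc0 b (mul z (bas (.L 0))),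
        hLc 0 (mul z (bas (.I b)))] at h
    push_cast at h
    exact hfact _ _ (hbb2 b hb) (by linear_combination h)
  have hbr4 : ∀ b : G, ⁅bas (.L (b+b)), bas (.I (-b))⁆ = (b:ℂ) • bas (.I b) := by
    intro b
    rw [hLI (b+b) (-b), show (b+b) + (-b) = b from by abel]
    congr 1
    push_cast
    ring
  have hMI_L2b : ∀ (z : Lg) (b : G), b ≠ 0 →
      bas.repr (mul z (bas (.I b))) (.L (b+b)) = 0 := by
    intro z b hb
    have h := hcp (bas (.L (b+b))) (bas (.I (-b))) z (.L (b+b))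
    rw [hbr4 b] at h
    simp only [map_smul, Finsupp.smul_apply, smul_eq_mul] at h
    rw [hsk (mul z (bas (.L (b+b)))) (bas (.I (-b))) (.L (b+b)),
        hIa0 (-b) (b+b) (mul z (bas (.L (b+b)))),
        hLa (b+b) (b+b) (mul z (bas (.I (-b)))), sub_self,
        hMI_Lne z (-b) 0 (hGneg b hb)
          (by push_cast; intro hh; exact cne b hb (by linear_combination hh/2))] at h
    exact hfact _ _ (hbb2 b hb) (by linear_combination h)
  have hMI_I2b : ∀ (z : Lg) (b : G), b ≠ 0 →
      bas.repr (mul z (bas (.I b))) (.I (b+b)) = 0 := by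
    intro z b hb
    have h := hcp (bas (.L (b+b))) (bas (.I (-b))) z (.I (b+b))
    rw [hbr4 b] at h
    simp only [map_smul, Finsupp.smul_apply, smul_eq_mul] at h
    rw [hsk (mul z (bas (.L (b+b)))) (bas (.I (-b))) (.I (b+b)),
        hIb' (-b) (b+b) (mul z (bas (.L (b+b)))),
        show (b+b) - (-b) = b+b+b from by abel,
        hML_Lne z (b+b) (b+b+b) (hGbb b hb)
          (by push_cast; intro hh; exact cne b hb (by linear_combination hh))
          (by push_cast; intro hh; exact cne b hb (by linear_combination -hh)),
        hLb (b+b) (b+b) (mul z (bas (.I (-b)))), sub_self,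
        hMI_Ine z (-b) 0 (hGneg b hb)
          (by push_cast; intro hh; exact cne b hb (by linear_combination hh))
          (by push_cast; intro hh; exact cne b hb (by linear_combination hh/2))] at h
    exact hfact _ _ (hbb2 b hb) (by linear_combination h)
  have hML : ∀ (z : Lg) (b : G), b ≠ 0 → mul z (bas (.L b)) =
      (bas.repr (mul z (bas (.L 0))) (.L 0)) • bas (.L b)
        - (bas.repr (mul z (bas (.L 0))) (.I 0)) • bas (.I b) := by
    intro z b hb
    apply bas.repr.injective
    apply Finsupp.ext
    intro i
    simp only [map_sub, map_smul, Finsupp.sub_apply, Finsupp.smul_apply, smul_eq_mul,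
      Module.Basis.repr_self, Finsupp.single_apply]
    cases i with
    | L i' =>
        by_cases h1 : b = i'
        · subst h1
          rw [hML_Lb z b hb]
          simp
        · rw [if_neg (by simpa using h1), if_neg (by simp)]
          by_cases h2 : i' = b + b
          · subst h2
            rw [hML_L2b z b hb]
            ring
          · rw [hML_Lne z b i' hb (fun hh => h1 (Subtype.ext hh.symm))
                (fun hh => h2 (Subtype.ext (by push_cast; exact hh)))]
            ring
    | I i' =>
        by_cases h1 : b = i'
        · subst h1
          rw [hML_Ib z b hb]
          simp
        · rw [if_neg (by simp), if_neg (by simpa using h1)]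
          by_cases h2 : i' = b + b
          · subst h2
            rw [hML_I2b z b hb]
            ring
          · rw [hML_Ine z b i' hb (fun hh => h1 (Subtype.ext hh.symm))
                (fun hh => h2 (Subtype.ext (by push_cast; exact hh)))]
            ring
    | CL =>
        rw [hML_CL z b hb]
        simp
  have hMI : ∀ (z : Lg) (b : G), b ≠ 0 → mul z (bas (.I b)) =
      (bas.repr (mul z (bas (.L 0))) (.L 0)) • bas (.I b) := by
    intro z b hb
    apply bas.repr.injective
    apply Finsupp.ext
    intro i
    simp only [map_smul, Finsupp.smul_apply, smul_eq_mul,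
      Module.Basis.repr_self, Finsupp.single_apply]
    cases i with
    | L i' =>
        rw [if_neg (by simp)]
        by_cases h2 : i' = b + b
        · subst h2
          rw [hMI_L2b z b hb]
          ring
        · rw [hMI_Lne z b i' hb (fun hh => h2 (Subtype.ext (by push_cast; exact hh)))]
          ring
    | I i' =>
        by_cases h1 : b = i'
        · subst h1
          rw [hMI_Ib z b hb]
          simp
        · rw [if_neg (by simpa using h1)]
          by_cases h2 : i' = b + b
          · subst h2
            rw [hMI_I2b z b hb]
            ring
          · rw [hMI_Ine z b i' hb (fun hh => h1 (Subtype.ext hh.symm))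
                (fun hh => h2 (Subtype.ext (by push_cast; exact hh)))]
            ring
    | CL =>
        rw [hMI_CL z b hb]
        simp
  have hZC : ∀ (z y : Lg), ⁅mul z (bas .CL), y⁆ = 0 := by
    intro z y
    have h := hcompat (bas .CL) y z
    rw [hCL y, hCL (mul z y)] at h
    simp only [map_zero, smul_zero, add_zero] at h
    exact h.symm
  have hcentral : ∀ u : Lg, ⁅bas (.L 0), u⁆ = 0 → ⁅bas (.L g), u⁆ = 0 →
      u = (bas.repr u .CL) • bas .CL := by
    intro u h0 hgl
    apply bas.repr.injective
    apply Finsupp.ext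
    intro i
    simp only [map_smul, Finsupp.smul_apply, smul_eq_mul, Module.Basis.repr_self,
      Finsupp.single_apply]
    cases i with
    | L i' =>
        rw [if_neg (by simp)]
        by_cases h1 : i' = 0
        · subst h1
          have h3 : bas.repr ⁅bas (.L g), u⁆ (.L g) = 0 := by rw [hgl]; simp
          rw [hLa g g u, sub_self] at h3
          have h4 : bas.repr u (.L 0) = 0 := by
            refine hfact _ _ (show ((g:ℂ) - 2*g) ≠ 0 from fun hh => cne g hg (by linear_combination -hh)) h3
          rw [h4]; ring
        · have h3 : bas.repr ⁅bas (.L 0), u⁆ (.L i') = 0 := by rw [h0]; simp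
          rw [hLa 0 i' u, sub_zero] at h3
          push_cast at h3
          have h4 : bas.repr u (.L i') = 0 :=
            hfact _ _ (cne i' h1) (by linear_combination h3)
          rw [h4]; ring
    | I i' =>
        rw [if_neg (by simp)]
        by_cases h1 : i' = 0
        · subst h1
          have h3 : bas.repr ⁅bas (.L g), u⁆ (.I g) = 0 := by rw [hgl]; simp
          rw [hLb g g u, sub_self] at h3
          have h4 : bas.repr u (.I 0) = 0 := hfact _ _ (cne g hg) h3
          rw [h4]; ring
        · have h3 : bas.repr ⁅bas (.L 0), u⁆ (.I i') = 0 := by rw [h0]; simp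
          rw [hLb 0 i' u, sub_zero] at h3
          have h4 : bas.repr u (.I i') = 0 := hfact _ _ (cne i' h1) h3
          rw [h4]; ring
    | CL => simp
  have hMC : ∀ z : Lg, mul z (bas .CL) = (bas.repr (mul z (bas .CL)) .CL) • bas .CL := by
    intro z
    refine hcentral (mul z (bas .CL)) ?_ ?_
    · rw [← lie_skew, hZC z (bas (.L 0))]; simp
    · rw [← lie_skew, hZC z (bas (.L g))]; simp
  have hW : ∀ z : Lg, mul z (bas (.L 0)) =
      (bas.repr (mul z (bas (.L 0))) (.L 0)) • bas (.L 0)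
      + (bas.repr (mul z (bas (.L 0))) (.I 0)) • bas (.I 0)
      + (bas.repr (mul z (bas (.L 0))) .CL) • bas .CL := by
    intro z
    apply bas.repr.injective
    apply Finsupp.ext
    intro i
    simp only [map_add, map_smul, Finsupp.add_apply, Finsupp.smul_apply, smul_eq_mul,
      Module.Basis.repr_self, Finsupp.single_apply]
    cases i with
    | L i' =>
        by_cases h1 : (0:G) = i'
        · rw [← h1]
          simp
        · rw [if_neg (by simpa using h1), if_neg (by simp), if_neg (by simp),
            hQ2 z i' (fun hh => h1 hh.symm)]
          ring
    | I i' =>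
        by_cases h1 : (0:G) = i'
        · rw [← h1]
          simp
        · rw [if_neg (by simp), if_neg (by simpa using h1), if_neg (by simp),
            hQ1 z i' (fun hh => h1 hh.symm)]
          ring
    | CL => simp
  have hGzero : ∀ x : G, (x:ℂ) = 0 → x = 0 := fun x h => Subtype.ext (by simpa using h)
  have hgg : g + g ≠ g := fun hh => hg (hGzero g (by
    have h2 := congrArg (fun t : G => (t:ℂ)) hh
    push_cast at h2
    linear_combination h2))
  have hpick : ∀ b : G, ∃ a : G, a ≠ 0 ∧ a ≠ b := by
    intro b
    by_cases h : b = g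
    · exact ⟨g+g, hGbb g hg, by rw [h]; exact hgg⟩
    · exact ⟨g, hg, fun hh => h hh.symm⟩
  have hstep1 : ∀ b : G, b ≠ 0 →
      bas.repr (mul (bas .CL) (bas (.L 0))) (.L 0) = 0 ∧
      bas.repr (mul (bas .CL) (bas (.L 0))) (.I 0) = 0 ∧
      mul (bas (.L b)) (bas .CL) = 0 := by
    intro b hb
    have e : (bas.repr (mul (bas .CL) (bas (.L 0))) (.L 0)) • bas (.L b)
        - (bas.repr (mul (bas .CL) (bas (.L 0))) (.I 0)) • bas (.I b)
        = (bas.repr (mul (bas (.L b)) (bas .CL)) .CL) • bas .CL := by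
      rw [← hML (bas .CL) b hb, hcomm (bas .CL) (bas (.L b))]
      exact hMC (bas (.L b))
    have c1 := congrArg (fun v => bas.repr v (.L b)) e
    have c2 := congrArg (fun v => bas.repr v (.I b)) e
    have c3 := congrArg (fun v => bas.repr v .CL) e
    simp at c1 c2 c3
    refine ⟨by linear_combination c1, by linear_combination c2, ?_⟩
    rw [hMC (bas (.L b)), show bas.repr (mul (bas (.L b)) (bas .CL)) .CL = 0 from by
      linear_combination -c3, zero_smul]
  have hstep2 : ∀ a b : G, a ≠ 0 → b ≠ 0 → a ≠ b →
      bas.repr (mul (bas (.I a)) (bas (.L 0))) (.L 0) = 0 ∧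
      bas.repr (mul (bas (.I a)) (bas (.L 0))) (.I 0) = 0 ∧
      bas.repr (mul (bas (.L b)) (bas (.L 0))) (.L 0) = 0 := by
    intro a b ha hb hab
    have e : (bas.repr (mul (bas (.I a)) (bas (.L 0))) (.L 0)) • bas (.L b)
        - (bas.repr (mul (bas (.I a)) (bas (.L 0))) (.I 0)) • bas (.I b)
        = (bas.repr (mul (bas (.L b)) (bas (.L 0))) (.L 0)) • bas (.I a) := by
      rw [← hML (bas (.I a)) b hb, hcomm (bas (.I a)) (bas (.L b)), hMI (bas (.L b)) a ha]
    have c1 := congrArg (fun v => bas.repr v (.L b)) e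
    have c2 := congrArg (fun v => bas.repr v (.I b)) e
    have c3 := congrArg (fun v => bas.repr v (.I a)) e
    simp [hab, Ne.symm hab] at c1 c2 c3
    exact ⟨by linear_combination c1, by linear_combination c2, by linear_combination -c3⟩
  have hALb0 : ∀ b : G, b ≠ 0 → bas.repr (mul (bas (.L b)) (bas (.L 0))) (.L 0) = 0 := by
    intro b hb
    obtain ⟨a, ha, hab⟩ := hpick b
    exact (hstep2 a b ha hb hab).2.2
  have hAI0 : ∀ a : G, a ≠ 0 → bas.repr (mul (bas (.I a)) (bas (.L 0))) (.L 0) = 0 := by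
    intro a ha
    obtain ⟨b, hb, hba⟩ := hpick a
    exact (hstep2 a b ha hb (Ne.symm hba)).1
  have hBI0 : ∀ a : G, a ≠ 0 → bas.repr (mul (bas (.I a)) (bas (.L 0))) (.I 0) = 0 := by
    intro a ha
    obtain ⟨b, hb, hba⟩ := hpick a
    exact (hstep2 a b ha hb (Ne.symm hba)).2.1
  have hBLb0 : ∀ a : G, a ≠ 0 → bas.repr (mul (bas (.L a)) (bas (.L 0))) (.I 0) = 0 := by
    intro a ha
    obtain ⟨b, hb, hba⟩ := hpick a
    have hab : a ≠ b := Ne.symm hba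
    have e : (bas.repr (mul (bas (.L a)) (bas (.L 0))) (.L 0)) • bas (.L b)
        - (bas.repr (mul (bas (.L a)) (bas (.L 0))) (.I 0)) • bas (.I b)
        = (bas.repr (mul (bas (.L b)) (bas (.L 0))) (.L 0)) • bas (.L a)
        - (bas.repr (mul (bas (.L b)) (bas (.L 0))) (.I 0)) • bas (.I a) := by
      rw [← hML (bas (.L a)) b hb, ← hML (bas (.L b)) a ha]
      exact hcomm _ _
    have c2 := congrArg (fun v => bas.repr v (.I b)) e
    simp [hab, Ne.symm hab] at c2
    exact c2
  have hLL00 : ∀ a b : G, a ≠ 0 → b ≠ 0 → mul (bas (.L a)) (bas (.L b)) = 0 := by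
    intro a b ha hb
    rw [hML (bas (.L a)) b hb, hALb0 a ha, hBLb0 a ha]
    simp
  have hLI00 : ∀ a b : G, a ≠ 0 → b ≠ 0 → mul (bas (.L a)) (bas (.I b)) = 0 := by
    intro a b ha hb
    rw [hMI (bas (.L a)) b hb, hALb0 a ha]
    simp
  have hIL00 : ∀ a b : G, a ≠ 0 → b ≠ 0 → mul (bas (.I a)) (bas (.L b)) = 0 := by
    intro a b ha hb
    rw [hML (bas (.I a)) b hb, hAI0 a ha, hBI0 a ha]
    simp
  have hII00 : ∀ a b : G, a ≠ 0 → b ≠ 0 → mul (bas (.I a)) (bas (.I b)) = 0 := by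
    intro a b ha hb
    rw [hMI (bas (.I a)) b hb, hAI0 a ha]
    simp
  have hCLb0 : ∀ b : G, b ≠ 0 → mul (bas .CL) (bas (.L b)) = 0 := by
    intro b hb
    rw [hML (bas .CL) b hb, (hstep1 b hb).1, (hstep1 b hb).2.1]
    simp
  have hLbC0 : ∀ b : G, b ≠ 0 → mul (bas (.L b)) (bas .CL) = 0 := fun b hb => (hstep1 b hb).2.2
  have hCIb0 : ∀ b : G, b ≠ 0 → mul (bas .CL) (bas (.I b)) = 0 := by
    intro b hb
    rw [hMI (bas .CL) b hb, (hstep1 b hb).1]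
    simp
  have hIbC0 : ∀ b : G, b ≠ 0 → mul (bas (.I b)) (bas .CL) = 0 := by
    intro b hb
    rw [hcomm]
    exact hCIb0 b hb
  have hL0blk : ∀ b : G, b ≠ 0 →
      bas.repr (mul (bas (.L 0)) (bas (.L 0))) (.L 0) = 0 ∧
      bas.repr (mul (bas (.L 0)) (bas (.L 0))) (.I 0) = 0 ∧
      mul (bas (.L b)) (bas (.L 0)) = 0 := by
    intro b hb
    have hvb : mul (bas (.L b)) (bas (.L 0))
        = (bas.repr (mul (bas (.L b)) (bas (.L 0))) .CL) • bas .CL := by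
      conv_lhs => rw [hW (bas (.L b))]
      rw [hALb0 b hb, hBLb0 b hb]
      simp
    have e : (bas.repr (mul (bas (.L b)) (bas (.L 0))) .CL) • bas .CL
        = (bas.repr (mul (bas (.L 0)) (bas (.L 0))) (.L 0)) • bas (.L b)
          - (bas.repr (mul (bas (.L 0)) (bas (.L 0))) (.I 0)) • bas (.I b) := by
      rw [← hvb, hcomm]
      exact hML (bas (.L 0)) b hb
    have c1 := congrArg (fun v => bas.repr v (.L b)) e
    have c2 := congrArg (fun v => bas.repr v (.I b)) e
    have c3 := congrArg (fun v => bas.repr v .CL) e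
    simp at c1 c2 c3
    refine ⟨by linear_combination -c1, by linear_combination c2, ?_⟩
    rw [hvb, show bas.repr (mul (bas (.L b)) (bas (.L 0))) .CL = 0 from by
      linear_combination c3, zero_smul]
  have hA00 : bas.repr (mul (bas (.L 0)) (bas (.L 0))) (.L 0) = 0 := (hL0blk g hg).1
  have hB00 : bas.repr (mul (bas (.L 0)) (bas (.L 0))) (.I 0) = 0 := (hL0blk g hg).2.1
  have hL0Ib : ∀ b : G, b ≠ 0 → mul (bas (.L 0)) (bas (.I b)) = 0 := by
    intro b hb
    rw [hMI (bas (.L 0)) b hb, hA00]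
    simp
  have hIbL0 : ∀ b : G, b ≠ 0 → mul (bas (.I b)) (bas (.L 0)) = 0 := by
    intro b hb
    rw [hcomm]
    exact hL0Ib b hb
  have hL0Lb : ∀ b : G, b ≠ 0 → mul (bas (.L 0)) (bas (.L b)) = 0 := by
    intro b hb
    rw [hML (bas (.L 0)) b hb, hA00, hB00]
    simp
  have hZI0 : ∀ z : Lg, (∀ a : G, a ≠ 0 → mul z (bas (.L a)) = 0) →
      (∀ a : G, a ≠ 0 → mul z (bas (.I a)) = 0) →
      (∃ s : ℂ, mul z (bas (.L 0)) = s • bas .CL) →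
      mul z (bas (.I 0)) = (bas.repr (mul z (bas (.I 0))) .CL) • bas .CL := by
    intro z hz1 hz2 hz3
    obtain ⟨s, hs⟩ := hz3
    refine hcentral _ ?_ ?_
    · have h := hcompat (bas (.L 0)) (bas (.I 0)) z
      rw [hLI 0 0, hs] at h
      simp only [ZeroMemClass.coe_zero, add_zero, zero_add, zero_smul, map_zero,
        smul_zero, smul_lie, hCL] at h
      simpa using h.symm
    · have h := hcompat (bas (.L g)) (bas (.I 0)) z
      rw [hLI g 0, hz1 g hg, show g + (0:G) = g from add_zero g, map_smul, hz2 g hg] at h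
      simp only [smul_zero, zero_lie, zero_add] at h
      exact h.symm
  have hstep5 : ∀ b : G, b ≠ 0 →
      bas.repr (mul (bas (.I 0)) (bas (.L 0))) (.L 0) = 0 ∧
      bas.repr (mul (bas (.I 0)) (bas (.L 0))) (.I 0) = 0 ∧
      mul (bas (.L b)) (bas (.I 0)) = 0 := by
    intro b hb
    have hvb := hZI0 (bas (.L b)) (fun a ha => hLL00 b a hb ha) (fun a ha => hLI00 b a hb ha)
      ⟨0, by rw [(hL0blk b hb).2.2, zero_smul]⟩
    have e : (bas.repr (mul (bas (.L b)) (bas (.I 0))) .CL) • bas .CL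
        = (bas.repr (mul (bas (.I 0)) (bas (.L 0))) (.L 0)) • bas (.L b)
          - (bas.repr (mul (bas (.I 0)) (bas (.L 0))) (.I 0)) • bas (.I b) := by
      rw [← hvb, hcomm]
      exact hML (bas (.I 0)) b hb
    have c1 := congrArg (fun v => bas.repr v (.L b)) e
    have c2 := congrArg (fun v => bas.repr v (.I b)) e
    have c3 := congrArg (fun v => bas.repr v .CL) e
    simp at c1 c2 c3
    refine ⟨by linear_combination -c1, by linear_combination c2, ?_⟩
    rw [hvb, show bas.repr (mul (bas (.L b)) (bas (.I 0))) .CL = 0 from by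
      linear_combination c3, zero_smul]
  have hAI00 : bas.repr (mul (bas (.I 0)) (bas (.L 0))) (.L 0) = 0 := (hstep5 g hg).1
  have hBI00 : bas.repr (mul (bas (.I 0)) (bas (.L 0))) (.I 0) = 0 := (hstep5 g hg).2.1
  have hI0Lb : ∀ b : G, b ≠ 0 → mul (bas (.I 0)) (bas (.L b)) = 0 := by
    intro b hb
    rw [hML (bas (.I 0)) b hb, hAI00, hBI00]
    simp
  have hI0Ib : ∀ b : G, b ≠ 0 → mul (bas (.I 0)) (bas (.I b)) = 0 := by
    intro b hb
    rw [hMI (bas (.I 0)) b hb, hAI00]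
    simp
  have hIbI0 : ∀ b : G, b ≠ 0 → mul (bas (.I b)) (bas (.I 0)) = 0 := by
    intro b hb
    rw [hcomm]
    exact hI0Ib b hb
  have hvL0L0 : mul (bas (.L 0)) (bas (.L 0))
      = (bas.repr (mul (bas (.L 0)) (bas (.L 0))) .CL) • bas .CL := by
    conv_lhs => rw [hW (bas (.L 0))]
    rw [hA00, hB00]
    simp
  have hvI0L0 : mul (bas (.I 0)) (bas (.L 0))
      = (bas.repr (mul (bas (.I 0)) (bas (.L 0))) .CL) • bas .CL := by
    conv_lhs => rw [hW (bas (.I 0))]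
    rw [hAI00, hBI00]
    simp
  have hvCL0 : mul (bas .CL) (bas (.L 0))
      = (bas.repr (mul (bas .CL) (bas (.L 0))) .CL) • bas .CL := by
    conv_lhs => rw [hW (bas .CL)]
    rw [(hstep1 g hg).1, (hstep1 g hg).2.1]
    simp
  have hbr5 : ∀ a : G, ⁅bas (.L a), bas (.L (-a))⁆
      = (-2*(a:ℂ)) • bas (.L 0) + (((a:ℂ)^3 - (a:ℂ))/12) • bas .CL := by
    intro a
    rw [hLL a (-a), show a + -a = (0:G) from by abel, if_pos rfl,
      show ((-a : G):ℂ) - (a:ℂ) = -2*(a:ℂ) from by push_cast; ring]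
  have hS6 : ∀ (s₁ s₂ : ℂ) (z : Lg), mul z (bas (.L 0)) = s₁ • bas .CL →
      mul z (bas .CL) = s₂ • bas .CL →
      (∀ a : G, a ≠ 0 → mul z (bas (.L a)) = 0) →
      s₁ = 0 ∧ s₂ = 0 := by
    intro s₁ s₂ z h1 h2 hz
    have key : ∀ a : G, a ≠ 0 → (-4*(a:ℂ))*s₁ + (((a:ℂ)^3 - (a:ℂ))/6)*s₂ = 0 := by
      intro a ha
      have h := hcompat (bas (.L a)) (bas (.L (-a))) z
      rw [hbr5 a, hz a ha, hz (-a) (hGneg a ha), zero_lie, lie_zero, add_zero,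
        map_add, map_smul, map_smul, h1, h2] at h
      have c := congrArg (fun v => bas.repr v .CL) h
      simp at c
      linear_combination c
    have k1 := key g hg
    have k2 := key (g+g) (hGbb g hg)
    push_cast at k2
    have hs2 : s₂ = 0 := by
      have h3 : (g:ℂ)^3 * s₂ = 0 := by linear_combination k2 - 2*k1
      exact hfact _ _ (pow_ne_zero 3 (cne g hg)) h3
    have hs1 : s₁ = 0 := by
      have h3 : (-4*(g:ℂ)) * s₁ = 0 := by rw [hs2] at k1; linear_combination k1
      exact hfact _ _ (by
        intro hh
        exact cne g hg (by linear_combination -hh/4)) h3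
    exact ⟨hs1, hs2⟩
  have hz6L0 := hS6 _ _ (bas (.L 0)) hvL0L0 (hMC (bas (.L 0))) hL0Lb
  have hz6I0 := hS6 _ _ (bas (.I 0)) hvI0L0 (hMC (bas (.I 0))) hI0Lb
  have hz6C := hS6 _ _ (bas .CL) hvCL0 (hMC (bas .CL)) hCLb0
  have hL0L0 : mul (bas (.L 0)) (bas (.L 0)) = 0 := by
    rw [hvL0L0, hz6L0.1, zero_smul]
  have hL0C : mul (bas (.L 0)) (bas .CL) = 0 := by
    rw [hMC (bas (.L 0)), hz6L0.2, zero_smul]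
  have hI0L0 : mul (bas (.I 0)) (bas (.L 0)) = 0 := by
    rw [hvI0L0, hz6I0.1, zero_smul]
  have hI0C : mul (bas (.I 0)) (bas .CL) = 0 := by
    rw [hMC (bas (.I 0)), hz6I0.2, zero_smul]
  have hCC : mul (bas .CL) (bas .CL) = 0 := by
    rw [hMC (bas .CL), hz6C.2, zero_smul]
  have hL0I0 : mul (bas (.L 0)) (bas (.I 0)) = 0 := by
    rw [hcomm]
    exact hI0L0
  have hI0I0 := hZI0 (bas (.I 0)) hI0Lb hI0Ib ⟨_, hvI0L0⟩
  refine ⟨bas.repr (mul (bas (.I 0)) (bas (.I 0))) .CL, hI0I0, ?_, ?_, ?_, ?_, hCC, ?_⟩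
  · intro a b
    rcases eq_or_ne a 0 with ha | ha
    · subst ha
      rcases eq_or_ne b 0 with hb | hb
      · subst hb; exact hL0L0
      · exact hL0Lb b hb
    · rcases eq_or_ne b 0 with hb | hb
      · subst hb; exact (hL0blk a ha).2.2
      · exact hLL00 a b ha hb
  · intro a b
    rcases eq_or_ne a 0 with ha | ha
    · subst ha
      rcases eq_or_ne b 0 with hb | hb
      · subst hb; exact hL0I0
      · exact hL0Ib b hb
    · rcases eq_or_ne b 0 with hb | hb
      · subst hb; exact (hstep5 a ha).2.2
      · exact hLI00 a b ha hb
  · intro a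
    rcases eq_or_ne a 0 with ha | ha
    · subst ha; exact hL0C
    · exact hLbC0 a ha
  · intro a
    rcases eq_or_ne a 0 with ha | ha
    · subst ha; exact hI0C
    · exact hIbC0 a ha
  · intro a b hab
    rcases eq_or_ne a 0 with ha | ha
    · subst ha
      rcases eq_or_ne b 0 with hb | hb
      · exact absurd ⟨rfl, hb⟩ hab
      · exact hI0Ib b hb
    · rcases eq_or_ne b 0 with hb | hb
      · subst hb; exact hIbI0 a ha
      · exact hII00 a b ha hb
end

section
/- Let G be a nontrivial additive subgroup of ℂ and let β ∈ ℂ. Define a bilinear multiplication · on the deformed generalized Heisenberg–Virasoro algebra g(G,−1) by setting I_0 · I_0 = β C_L and the product of every other pair of basis elements equal to zero. Then · is commutative and associative, it is a transposed Poisson structure on g(G,−1) (i.e. 2 z·[x,y] = [z·x, y] + [x, z·y] for all x, y, z), and moreover (g(G,−1), ·, [·,·]) is a Poisson algebra, i.e. the Leibniz rule [x, y·z] = [x,y]·z + y·[x,z] holds for all x, y, z. -/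
open scoped Classical

/-- the bilinear multiplication on `g(G, -1)` given by
`I_0 · I_0 = β C_L` and zero on all other pairs of basis vectors is a
commutative associative multiplication, it is a transposed Poisson structure
on `g(G, -1)`, and it even makes `g(G, -1)` a Poisson algebra. -/
theorem transposedPoisson_dgHV_neg_one_construction
    (G : AddSubgroup ℂ) [Nontrivial G] (β : ℂ)
    (Lg : Type*) [LieRing Lg] [LieAlgebra ℂ Lg]
    (bas : Module.Basis (DGHVIdx G) ℂ Lg)
    (hLL : ∀ a b : G, ⁅bas (DGHVIdx.L a), bas (DGHVIdx.L b)⁆ =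
      ((b : ℂ) - (a : ℂ)) • bas (DGHVIdx.L (a + b)) +
        (if a + b = 0 then ((a : ℂ) ^ 3 - (a : ℂ)) / 12 else 0) • bas DGHVIdx.CL)
    (hLI : ∀ a b : G, ⁅bas (DGHVIdx.L a), bas (DGHVIdx.I b)⁆ =
      ((a : ℂ) + (b : ℂ)) • bas (DGHVIdx.I (a + b)))
    (hII : ∀ a b : G, ⁅bas (DGHVIdx.I a), bas (DGHVIdx.I b)⁆ = 0)
    (hCL : ∀ x : Lg, ⁅bas DGHVIdx.CL, x⁆ = 0)
    (mul : Lg →ₗ[ℂ] Lg →ₗ[ℂ] Lg)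
    (hmulII00 : mul (bas (DGHVIdx.I 0)) (bas (DGHVIdx.I 0)) = β • bas DGHVIdx.CL)
    (hmulLL : ∀ a b : G, mul (bas (DGHVIdx.L a)) (bas (DGHVIdx.L b)) = 0)
    (hmulLI : ∀ a b : G, mul (bas (DGHVIdx.L a)) (bas (DGHVIdx.I b)) = 0)
    (hmulIL : ∀ a b : G, mul (bas (DGHVIdx.I a)) (bas (DGHVIdx.L b)) = 0)
    (hmulLC : ∀ a : G, mul (bas (DGHVIdx.L a)) (bas DGHVIdx.CL) = 0)
    (hmulCL' : ∀ a : G, mul (bas DGHVIdx.CL) (bas (DGHVIdx.L a)) = 0)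
    (hmulIC : ∀ a : G, mul (bas (DGHVIdx.I a)) (bas DGHVIdx.CL) = 0)
    (hmulCI : ∀ a : G, mul (bas DGHVIdx.CL) (bas (DGHVIdx.I a)) = 0)
    (hmulCC : mul (bas DGHVIdx.CL) (bas DGHVIdx.CL) = 0)
    (hmulII : ∀ a b : G, ¬(a = 0 ∧ b = 0) →
      mul (bas (DGHVIdx.I a)) (bas (DGHVIdx.I b)) = 0) :
    (∀ x y : Lg, mul x y = mul y x) ∧
    (∀ x y z : Lg, mul (mul x y) z = mul x (mul y z)) ∧
    (∀ x y z : Lg,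
      (2 : ℂ) • mul z ⁅x, y⁆ = ⁅mul z x, y⁆ + ⁅x, mul z y⁆) ∧
    (∀ x y z : Lg, ⁅x, mul y z⁆ = mul ⁅x, y⁆ z + mul y ⁅x, z⁆) := by

  classical
  -- rows of the multiplication table as linear maps
  have hLz : ∀ a : G, mul (bas (DGHVIdx.L a)) = 0 := by
    intro a
    apply bas.ext; intro j
    cases j with
    | L b => simpa using hmulLL a b
    | I b => simpa using hmulLI a b
    | CL => simpa using hmulLC a
  have hCz : mul (bas DGHVIdx.CL) = 0 := by
    apply bas.ext; intro j
    cases j with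
    | L b => simpa using hmulCL' b
    | I b => simpa using hmulCI b
    | CL => simpa using hmulCC
  have hIz : ∀ c : G, c ≠ 0 → mul (bas (DGHVIdx.I c)) = 0 := by
    intro c hc
    apply bas.ext; intro j
    cases j with
    | L b => simpa using hmulIL c b
    | I b => simpa using hmulII c b (fun h => hc h.1)
    | CL => simpa using hmulIC c
  -- commutativity
  have hcomm : ∀ x y : Lg, mul x y = mul y x := by
    have h : mul = mul.flip := by
      apply bas.ext; intro i
      apply bas.ext; intro j
      simp only [LinearMap.flip_apply]
      cases i with
      | L a =>
        cases j with
        | L b => rw [hmulLL, hmulLL]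
        | I b => rw [hmulLI, hmulIL]
        | CL => rw [hmulLC, hmulCL']
      | I a =>
        cases j with
        | L b => rw [hmulIL, hmulLI]
        | I b =>
          by_cases h0 : a = 0 ∧ b = 0
          · obtain ⟨rfl, rfl⟩ := h0; rfl
          · rw [hmulII a b h0, hmulII b a fun h => h0 ⟨h.2, h.1⟩]
        | CL => rw [hmulIC, hmulCI]
      | CL =>
        cases j with
        | L b => rw [hmulCL', hmulLC]
        | I b => rw [hmulCI, hmulIC]
        | CL => rfl
    intro x y
    conv_lhs => rw [h]
    rfl
  -- right annihilation
  have hL0 : ∀ (a : G) (z : Lg), mul z (bas (DGHVIdx.L a)) = 0 := by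
    intro a z; rw [hcomm, hLz]; rfl
  have hC0 : ∀ z : Lg, mul z (bas DGHVIdx.CL) = 0 := by
    intro z; rw [hcomm, hCz]; rfl
  have hI0 : ∀ (c : G), c ≠ 0 → ∀ z : Lg, mul z (bas (DGHVIdx.I c)) = 0 := by
    intro c hc z; rw [hcomm, hIz c hc]; rfl
  -- mul z of any bracket vanishes
  have hzb : ∀ z x y : Lg, mul z ⁅x, y⁆ = 0 := by
    intro z x y
    letI : LieRing (Module.End ℂ Lg) := LieRing.ofAssociativeRing
    have h : LinearMap.compr₂ ((LieAlgebra.ad ℂ Lg).toLinearMap) (mul z) = 0 := by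
      apply bas.ext; intro i
      apply bas.ext; intro j
      simp only [LinearMap.compr₂_apply, LieHom.coe_toLinearMap, LieAlgebra.ad_apply,
        LinearMap.zero_apply]
      cases i with
      | L a =>
        cases j with
        | L b =>
          rw [hLL, map_add, map_smul, map_smul, hL0, hC0, smul_zero, smul_zero, add_zero]
        | I b =>
          rw [hLI, map_smul]
          by_cases h0 : a + b = 0
          · have hc : ((a : ℂ) + (b : ℂ)) = 0 := by
              have := congrArg (Subtype.val) h0
              push_cast at this
              simpa using this
            rw [hc, zero_smul]
          · rw [hI0 _ h0, smul_zero]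
        | CL => rw [← lie_skew, hCL, neg_zero, map_zero]
      | I a =>
        cases j with
        | L b =>
          rw [← lie_skew, hLI, map_neg, map_smul]
          by_cases h0 : b + a = 0
          · have hc : ((b : ℂ) + (a : ℂ)) = 0 := by
              have := congrArg (Subtype.val) h0
              push_cast at this
              simpa using this
            rw [hc, zero_smul, neg_zero]
          · rw [hI0 _ h0, smul_zero, neg_zero]
        | I b => rw [hII, map_zero]
        | CL => rw [← lie_skew, hCL, neg_zero, map_zero]
      | CL => rw [hCL, map_zero]
    have h2 := LinearMap.congr_fun (LinearMap.congr_fun h x) y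
    simpa [LinearMap.compr₂_apply] using h2
  -- products of basis vectors other than I0*I0 vanish
  have hbas0 : ∀ i j : DGHVIdx G, ¬(i = DGHVIdx.I 0 ∧ j = DGHVIdx.I 0) →
      mul (bas i) (bas j) = 0 := by
    intro i j hij
    cases i with
    | L a => rw [hLz]; rfl
    | CL => rw [hCz]; rfl
    | I a =>
      cases j with
      | L b => exact hmulIL a b
      | CL => exact hmulIC a
      | I b =>
        apply hmulII
        rintro ⟨rfl, rfl⟩
        exact hij ⟨rfl, rfl⟩
  -- brackets with products vanish
  have hbr : ∀ x y z : Lg, ⁅mul x y, z⁆ = 0 := by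
    intro x y z
    have h : LinearMap.compr₂ mul
        ({ toFun := fun w => ⁅w, z⁆
           map_add' := fun u v => add_lie u v z
           map_smul' := fun c u => smul_lie c u z } : Lg →ₗ[ℂ] Lg) = 0 := by
      apply bas.ext; intro i
      apply bas.ext; intro j
      simp only [LinearMap.compr₂_apply, LinearMap.zero_apply, LinearMap.coe_mk,
        AddHom.coe_mk]
      by_cases hij : i = DGHVIdx.I 0 ∧ j = DGHVIdx.I 0
      · obtain ⟨rfl, rfl⟩ := hij
        rw [hmulII00, smul_lie, hCL, smul_zero]
      · rw [hbas0 i j hij, zero_lie]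
    have h2 := LinearMap.congr_fun (LinearMap.congr_fun h x) y
    simpa [LinearMap.compr₂_apply] using h2
  -- triple products vanish
  have hmm : ∀ x y z : Lg, mul (mul x y) z = 0 := by
    have h : LinearMap.compr₂ mul mul = 0 := by
      apply bas.ext; intro i
      apply bas.ext; intro j
      simp only [LinearMap.compr₂_apply, LinearMap.zero_apply]
      by_cases hij : i = DGHVIdx.I 0 ∧ j = DGHVIdx.I 0
      · obtain ⟨rfl, rfl⟩ := hij
        rw [hmulII00, map_smul, hCz, smul_zero]
      · rw [hbas0 i j hij, map_zero]
    intro x y z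
    have h2 := LinearMap.congr_fun
      (LinearMap.congr_fun (LinearMap.congr_fun h x) y) z
    simpa [LinearMap.compr₂_apply] using h2
  refine ⟨hcomm, ?_, ?_, ?_⟩
  · intro x y z
    rw [hmm, hcomm x (mul y z), hmm]
  · intro x y z
    rw [hzb, smul_zero, hbr, ← lie_skew, hbr, neg_zero, add_zero]
  · intro x y z
    rw [← lie_skew, hbr, neg_zero, hcomm ⁅x, y⁆ z, hzb, hzb, add_zero]
end

section
/- Let G be a nontrivial additive subgroup of ℂ, let λ ∈ ℂ, and let (a^{d,k}) be a finitely supported family of complex numbers indexed by d ∈ G and integers k ≥ 1. Then the linear map φ on the not-finitely graded Heisenberg–Virasoro algebra Ŵ(G) defined on the basis by φ(L_{α,i}) = λ L_{α,i} + Σ_{d ∈ G} Σ_{k ≥ 1} a^{d,k} L_{α+d, i+k} and φ(C) = λ C is a 1/2-derivation of Ŵ(G). -/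
open scoped Classical

/-- Index set for the basis of the not-finitely graded Heisenberg–Virasoro
algebra `Ŵ(G)`: vectors `L α i` for `α ∈ G`, `i ∈ ℤ_{≥0}`, together with the
central element `C`. -/
inductive WhatIdx (G : AddSubgroup ℂ) : Type
  | L : G → ℕ → WhatIdx G
  | C : WhatIdx G

/-- for any `λ ∈ ℂ` and any finitely supported family
`(a^{d,k})` with `d ∈ G`, `k ≥ 1`, the linear map given on the basis of
`Ŵ(G)` by `φ(L_{α,i}) = λ L_{α,i} + Σ_{d,k≥1} a^{d,k} L_{α+d,i+k}` and
`φ(C) = λ C` is a `1/2`-derivation of `Ŵ(G)`. -/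
theorem halfDerivation_What_construction
    (G : AddSubgroup ℂ) [Nontrivial G]
    (Lg : Type*) [LieRing Lg] [LieAlgebra ℂ Lg]
    (bas : Module.Basis (WhatIdx G) ℂ Lg)
    (hLL : ∀ (α β : G) (i j : ℕ),
      ⁅bas (WhatIdx.L α i), bas (WhatIdx.L β j)⁆ =
        ((β : ℂ) - (α : ℂ)) • bas (WhatIdx.L (α + β) (i + j)) +
        ((j : ℂ) - (i : ℂ)) • bas (WhatIdx.L (α + β) (i + j + 1)) +
        (if α + β = 0 ∧ i = 0 ∧ j = 0 then ((α : ℂ) ^ 3 - (α : ℂ)) / 12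
          else 0) • bas WhatIdx.C)
    (hC : ∀ x : Lg, ⁅bas WhatIdx.C, x⁆ = 0)
    (lam : ℂ) (a : G × ℕ →₀ ℂ) (ha : ∀ d : G, a (d, 0) = 0)
    (φ : Lg →ₗ[ℂ] Lg)
    (hφL : ∀ (α : G) (i : ℕ), φ (bas (WhatIdx.L α i)) =
      lam • bas (WhatIdx.L α i) +
        a.sum (fun p c => c • bas (WhatIdx.L (α + p.1) (i + p.2))))
    (hφC : φ (bas WhatIdx.C) = lam • bas WhatIdx.C) :
    ∀ x y : Lg, φ ⁅x, y⁆ = (1 / 2 : ℂ) • (⁅φ x, y⁆ + ⁅x, φ y⁆) := by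
  classical
  have sum_lie : ∀ (s : Finset (G × ℕ)) (f : G × ℕ → Lg) (y : Lg),
      ⁅∑ p ∈ s, f p, y⁆ = ∑ p ∈ s, ⁅f p, y⁆ := by
    intro s f y
    induction s using Finset.cons_induction with
    | empty => simp
    | cons p s hp ih => rw [Finset.sum_cons, Finset.sum_cons, add_lie, ih]
  have lie_sum' : ∀ (s : Finset (G × ℕ)) (f : G × ℕ → Lg) (y : Lg),
      ⁅y, ∑ p ∈ s, f p⁆ = ∑ p ∈ s, ⁅y, f p⁆ := by
    intro s f y
    induction s using Finset.cons_induction with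
    | empty => simp
    | cons p s hp ih => rw [Finset.sum_cons, Finset.sum_cons, lie_add, ih]
  have hsupp : ∀ p ∈ a.support, p.2 ≠ 0 := by
    intro p hp h0
    apply Finsupp.mem_support_iff.mp hp
    have h := ha p.1
    rwa [← h0, Prod.mk.eta] at h
  have lieC : ∀ x : Lg, ⁅x, bas WhatIdx.C⁆ = 0 := fun x => by
    rw [← lie_skew, hC, neg_zero]
  have key : ∀ u v : WhatIdx G,
      φ ⁅bas u, bas v⁆ = (1 / 2 : ℂ) • (⁅φ (bas u), bas v⁆ + ⁅bas u, φ (bas v)⁆) := by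
    intro u v
    cases u with
    | C => simp [hC, hφC, lie_smul, smul_lie]
    | L α i =>
      cases v with
      | C => simp [lieC, hφC, lie_smul]
      | L β j =>
        rw [hLL α β i j]
        rw [map_add, map_add, map_smul, map_smul, map_smul, hφL, hφL, hφC]
        rw [hφL α i, hφL β j]
        rw [add_lie, lie_add, smul_lie, lie_smul]
        rw [Finsupp.sum, Finsupp.sum, Finsupp.sum, Finsupp.sum]
        rw [sum_lie, lie_sum']
        rw [hLL α β i j]
        have e1 : ∀ p ∈ a.support,
            ⁅a p • bas (WhatIdx.L (α + p.1) (i + p.2)), bas (WhatIdx.L β j)⁆ =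
            a p • (((β : ℂ) - (α : ℂ) - (p.1 : ℂ)) • bas (WhatIdx.L (α + β + p.1) (i + j + p.2)) +
              ((j : ℂ) - (i : ℂ) - (p.2 : ℂ)) • bas (WhatIdx.L (α + β + p.1) (i + j + p.2 + 1))) := by
          intro p hp
          rw [smul_lie, hLL]
          have hne : ¬ ((α + p.1) + β = 0 ∧ i + p.2 = 0 ∧ j = 0) := by
            rintro ⟨-, h2, -⟩
            exact hsupp p hp (by omega)
          rw [if_neg hne]
          have h1 : α + p.1 + β = α + β + p.1 := by abel
          have h2 : i + p.2 + j = i + j + p.2 := by omega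
          rw [h1, h2]
          push_cast
          module
        have e2 : ∀ p ∈ a.support,
            ⁅bas (WhatIdx.L α i), a p • bas (WhatIdx.L (β + p.1) (j + p.2))⁆ =
            a p • (((β : ℂ) - (α : ℂ) + (p.1 : ℂ)) • bas (WhatIdx.L (α + β + p.1) (i + j + p.2)) +
              ((j : ℂ) - (i : ℂ) + (p.2 : ℂ)) • bas (WhatIdx.L (α + β + p.1) (i + j + p.2 + 1))) := by
          intro p hp
          rw [lie_smul, hLL]
          have hne : ¬ (α + (β + p.1) = 0 ∧ i = 0 ∧ j + p.2 = 0) := by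
            rintro ⟨-, -, h2⟩
            exact hsupp p hp (by omega)
          rw [if_neg hne]
          have h1 : α + (β + p.1) = α + β + p.1 := by abel
          have h2 : i + (j + p.2) = i + j + p.2 := by omega
          rw [h1, h2]
          push_cast
          module
        rw [Finset.sum_congr rfl e1, Finset.sum_congr rfl e2]
        have f2 : (∑ p ∈ a.support, a p • bas (WhatIdx.L (α + β + p.1) (i + j + 1 + p.2))) =
            ∑ p ∈ a.support, a p • bas (WhatIdx.L (α + β + p.1) (i + j + p.2 + 1)) := by
          refine Finset.sum_congr rfl fun p _ => ?_
          have h : i + j + 1 + p.2 = i + j + p.2 + 1 := by omega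
          rw [h]
        rw [f2]
        set S1 := ∑ p ∈ a.support, a p • bas (WhatIdx.L (α + β + p.1) (i + j + p.2)) with hS1
        set S2 := ∑ p ∈ a.support, a p • bas (WhatIdx.L (α + β + p.1) (i + j + p.2 + 1)) with hS2
        set T1 := ∑ p ∈ a.support, a p •
            (((β : ℂ) - (α : ℂ) - (p.1 : ℂ)) • bas (WhatIdx.L (α + β + p.1) (i + j + p.2)) +
              ((j : ℂ) - (i : ℂ) - (p.2 : ℂ)) • bas (WhatIdx.L (α + β + p.1) (i + j + p.2 + 1))) with hT1
        set T2 := ∑ p ∈ a.support, a p •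
            (((β : ℂ) - (α : ℂ) + (p.1 : ℂ)) • bas (WhatIdx.L (α + β + p.1) (i + j + p.2)) +
              ((j : ℂ) - (i : ℂ) + (p.2 : ℂ)) • bas (WhatIdx.L (α + β + p.1) (i + j + p.2 + 1))) with hT2
        have hsum : ((β : ℂ) - (α : ℂ)) • S1 + ((j : ℂ) - (i : ℂ)) • S2 =
            (1 / 2 : ℂ) • (T1 + T2) := by
          rw [hS1, hS2, hT1, hT2, Finset.smul_sum, Finset.smul_sum,
            ← Finset.sum_add_distrib, ← Finset.sum_add_distrib, Finset.smul_sum]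
          refine Finset.sum_congr rfl fun p _ => ?_
          module
        calc ((β : ℂ) - (α : ℂ)) • (lam • bas (WhatIdx.L (α + β) (i + j)) + S1) +
              ((j : ℂ) - (i : ℂ)) • (lam • bas (WhatIdx.L (α + β) (i + j + 1)) + S2) +
              (if α + β = 0 ∧ i = 0 ∧ j = 0 then ((α : ℂ) ^ 3 - (α : ℂ)) / 12 else 0) •
                lam • bas WhatIdx.C
            = (((β : ℂ) - (α : ℂ)) • S1 + ((j : ℂ) - (i : ℂ)) • S2) +
              (((β : ℂ) - (α : ℂ)) • lam • bas (WhatIdx.L (α + β) (i + j)) +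
               ((j : ℂ) - (i : ℂ)) • lam • bas (WhatIdx.L (α + β) (i + j + 1)) +
               (if α + β = 0 ∧ i = 0 ∧ j = 0 then ((α : ℂ) ^ 3 - (α : ℂ)) / 12 else 0) •
                 lam • bas WhatIdx.C) := by module
          _ = (1 / 2 : ℂ) • (T1 + T2) +
              (((β : ℂ) - (α : ℂ)) • lam • bas (WhatIdx.L (α + β) (i + j)) +
               ((j : ℂ) - (i : ℂ)) • lam • bas (WhatIdx.L (α + β) (i + j + 1)) +
               (if α + β = 0 ∧ i = 0 ∧ j = 0 then ((α : ℂ) ^ 3 - (α : ℂ)) / 12 else 0) •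
                 lam • bas WhatIdx.C) := by rw [hsum]
          _ = (1 / 2 : ℂ) •
              (lam • (((β : ℂ) - (α : ℂ)) • bas (WhatIdx.L (α + β) (i + j)) +
                  ((j : ℂ) - (i : ℂ)) • bas (WhatIdx.L (α + β) (i + j + 1)) +
                  (if α + β = 0 ∧ i = 0 ∧ j = 0 then ((α : ℂ) ^ 3 - (α : ℂ)) / 12 else 0) •
                    bas WhatIdx.C) + T1 +
               (lam • (((β : ℂ) - (α : ℂ)) • bas (WhatIdx.L (α + β) (i + j)) +
                  ((j : ℂ) - (i : ℂ)) • bas (WhatIdx.L (α + β) (i + j + 1)) +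
                  (if α + β = 0 ∧ i = 0 ∧ j = 0 then ((α : ℂ) ^ 3 - (α : ℂ)) / 12 else 0) •
                    bas WhatIdx.C) + T2)) := by module
  -- conclude by bilinearity
  have hB : (LinearMap.mk₂ ℂ (fun x y => φ ⁅x, y⁆)
      (fun m₁ m₂ n => by simp only [add_lie, map_add])
      (fun c m n => by simp only [smul_lie, map_smul])
      (fun m n₁ n₂ => by simp only [lie_add, map_add])
      (fun c m n => by simp only [lie_smul, map_smul])) =
      (LinearMap.mk₂ ℂ (fun x y => (1 / 2 : ℂ) • (⁅φ x, y⁆ + ⁅x, φ y⁆))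
      (fun m₁ m₂ n => by simp only [map_add, add_lie]; module)
      (fun c m n => by simp only [map_smul, smul_lie, lie_smul]; module)
      (fun m n₁ n₂ => by simp only [map_add, lie_add]; module)
      (fun c m n => by simp only [map_smul, lie_smul, smul_lie]; module)) :=
    LinearMap.ext_basis bas bas fun u v => key u v
  intro x y
  have h := LinearMap.congr_fun (LinearMap.congr_fun hB x) y
  simpa using h
end

section
/- Let G be a nontrivial additive subgroup of ℂ and let · be a transposed Poisson structure on the not-finitely graded Heisenberg–Virasoro algebra Ŵ(G). Then C · x = 0 for all x ∈ Ŵ(G), and there exists a finitely supported family of complex numbers (a^{d,k}) indexed by d ∈ G and k ∈ ℤ_{≥0} such that L_{α,i} · L_{β,j} = Σ_{d ∈ G} Σ_{k ∈ ℤ_{≥0}} a^{d,k} L_{d+α+β, k+i+j+1} for all α, β ∈ G and i, j ∈ ℤ_{≥0}. -/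
open scoped Classical

namespace TP
variable {G : AddSubgroup ℂ} {Lg : Type*} [LieRing Lg] [LieAlgebra ℂ Lg]

/-- Hypothesis: structure constants of the bracket. -/
def HLL (bas : Module.Basis (WhatIdx G) ℂ Lg) : Prop :=
  ∀ (α β : G) (i j : ℕ),
      ⁅bas (WhatIdx.L α i), bas (WhatIdx.L β j)⁆ =
        ((β : ℂ) - (α : ℂ)) • bas (WhatIdx.L (α + β) (i + j)) +
        ((j : ℂ) - (i : ℂ)) • bas (WhatIdx.L (α + β) (i + j + 1)) +
        (if α + β = 0 ∧ i = 0 ∧ j = 0 then ((α : ℂ) ^ 3 - (α : ℂ)) / 12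
          else 0) • bas WhatIdx.C

def HCc (bas : Module.Basis (WhatIdx G) ℂ Lg) : Prop := ∀ x : Lg, ⁅bas WhatIdx.C, x⁆ = 0

noncomputable def phiL (bas : Module.Basis (WhatIdx G) ℂ Lg) (γ : G) (n : ℤ) : Lg →ₗ[ℂ] ℂ :=
  if 0 ≤ n then (Finsupp.lapply (WhatIdx.L γ n.toNat)).comp
    (bas.repr : Lg →ₗ[ℂ] (WhatIdx G →₀ ℂ)) else 0

noncomputable def psiL (bas : Module.Basis (WhatIdx G) ℂ Lg) : Lg →ₗ[ℂ] ℂ :=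
  (Finsupp.lapply WhatIdx.C).comp (bas.repr : Lg →ₗ[ℂ] (WhatIdx G →₀ ℂ))

lemma phiL_neg (bas : Module.Basis (WhatIdx G) ℂ Lg) (γ : G) {n : ℤ} (hn : n < 0) (v : Lg) :
    phiL bas γ n v = 0 := by
  rw [phiL, if_neg (by omega)]; rfl

lemma phiL_nat (bas : Module.Basis (WhatIdx G) ℂ Lg) (γ : G) (m : ℕ) (v : Lg) :
    phiL bas γ (m : ℤ) v = bas.repr v (WhatIdx.L γ m) := by
  rw [phiL, if_pos (by omega)]
  simp

lemma phiL_L (bas : Module.Basis (WhatIdx G) ℂ Lg) (γ : G) (n : ℤ) (δ : G) (m : ℕ) :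
    phiL bas γ n (bas (WhatIdx.L δ m)) = if γ = δ ∧ n = m then 1 else 0 := by
  rw [phiL]
  split_ifs with h h2 h3
  · simp only [LinearMap.comp_apply, Finsupp.lapply_apply, LinearEquiv.coe_coe,
      Module.Basis.repr_self_apply]
    rw [if_pos]
    rw [h2.1]
    congr 1
    omega
  · simp only [LinearMap.comp_apply, Finsupp.lapply_apply, LinearEquiv.coe_coe,
      Module.Basis.repr_self_apply]
    rw [if_neg]
    intro he
    injection he with e1 e2
    exact h2 ⟨e1.symm, by omega⟩
  · exfalso; omega
  · rfl

lemma phiL_C (bas : Module.Basis (WhatIdx G) ℂ Lg) (γ : G) (n : ℤ) :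
    phiL bas γ n (bas WhatIdx.C) = 0 := by
  rw [phiL]
  split_ifs with h
  · simp only [LinearMap.comp_apply, Finsupp.lapply_apply, LinearEquiv.coe_coe,
      Module.Basis.repr_self_apply]
    rw [if_neg (by simp)]
  · rfl

lemma psiL_L (bas : Module.Basis (WhatIdx G) ℂ Lg) (δ : G) (m : ℕ) :
    psiL bas (bas (WhatIdx.L δ m)) = 0 := by
  simp only [psiL, LinearMap.comp_apply, Finsupp.lapply_apply, LinearEquiv.coe_coe,
    Module.Basis.repr_self_apply]
  rw [if_neg (by simp)]

lemma psiL_C (bas : Module.Basis (WhatIdx G) ℂ Lg) : psiL bas (bas WhatIdx.C) = 1 := by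
  simp [psiL, LinearEquiv.coe_coe]

noncomputable def brkR (w : Lg) : Lg →ₗ[ℂ] Lg :=
  { toFun := fun v => ⁅v, w⁆, map_add' := fun a b => add_lie a b w,
    map_smul' := fun c a => smul_lie c a w }

@[simp] lemma brkR_apply (w v : Lg) : brkR w v = ⁅v, w⁆ := rfl

lemma phi_brk (bas : Module.Basis (WhatIdx G) ℂ Lg) (hLL : HLL bas) (hC : HCc bas)
    (β : G) (j : ℕ) (γ : G) (n : ℤ) (v : Lg) :
    phiL bas γ n ⁅v, bas (WhatIdx.L β j)⁆ =
      (2*(β:ℂ) - γ) * phiL bas (γ - β) (n - j) v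
      + (2*(j:ℂ) + 1 - n) * phiL bas (γ - β) (n - j - 1) v := by
  simp only [HLL] at hLL
  simp only [HCc] at hC
  have key : (phiL bas γ n).comp (brkR (bas (WhatIdx.L β j))) =
      (2*(β:ℂ) - γ) • phiL bas (γ-β) (n - (j:ℤ)) + (2*(j:ℂ)+1-n) • phiL bas (γ-β) (n-j-1) := by
    apply bas.ext
    intro idx
    cases idx with
    | C =>
      simp only [LinearMap.comp_apply, brkR_apply, hC, map_zero, LinearMap.add_apply,
        LinearMap.smul_apply, phiL_C, smul_eq_mul, mul_zero, add_zero]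
    | L δ m =>
      simp only [LinearMap.comp_apply, brkR_apply, hLL δ β m j, map_add, map_smul, phiL_L, phiL_C,
        LinearMap.add_apply, LinearMap.smul_apply, smul_eq_mul, mul_zero, add_zero]
      have hiff : ∀ n' : ℤ, (γ - β = δ ∧ n' = m) ↔ (γ = δ + β ∧ n' = m) := by
        intro n'; rw [sub_eq_iff_eq_add]
      simp only [hiff]
      by_cases h1 : γ = δ + β
      · simp only [h1, true_and, if_true]
        by_cases h2 : n = (m:ℤ) + j
        · rw [if_pos (by push_cast; omega), if_neg (by push_cast; omega),
            if_pos (by push_cast; omega), if_neg (by push_cast; omega)]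
          subst h2; push_cast; ring
        · by_cases h3 : n = (m:ℤ) + j + 1
          · rw [if_neg (by push_cast; omega), if_pos (by push_cast; omega),
              if_neg (by push_cast; omega), if_pos (by push_cast; omega)]
            subst h3; push_cast; ring
          · rw [if_neg (by push_cast; omega), if_neg (by push_cast; omega),
              if_neg (by push_cast; omega), if_neg (by push_cast; omega)]
            ring
      · simp only [h1, false_and, if_false]; ring
  have := LinearMap.congr_fun key v
  simpa using this

lemma psi_brk (bas : Module.Basis (WhatIdx G) ℂ Lg) (hLL : HLL bas) (hC : HCc bas)
    (β : G) (j : ℕ) (v : Lg) :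
    psiL bas ⁅v, bas (WhatIdx.L β j)⁆ =
      (if j = 0 then ((β:ℂ) - (β:ℂ)^3)/12 else 0) * phiL bas (-β) 0 v := by
  simp only [HLL] at hLL
  simp only [HCc] at hC
  have key : (psiL bas).comp (brkR (bas (WhatIdx.L β j))) =
      (if j = 0 then ((β:ℂ) - (β:ℂ)^3)/12 else 0) • phiL bas (-β) (0:ℤ) := by
    apply bas.ext
    intro idx
    cases idx with
    | C =>
      simp only [LinearMap.comp_apply, brkR_apply, hC, map_zero, LinearMap.smul_apply,
        phiL_C, smul_eq_mul, mul_zero]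
    | L δ m =>
      simp only [LinearMap.comp_apply, brkR_apply, hLL δ β m j, map_add, map_smul, psiL_L,
        psiL_C, phiL_L, LinearMap.smul_apply, smul_eq_mul, mul_zero, mul_one, add_zero, zero_add]
      by_cases h1 : δ + β = 0 ∧ m = 0 ∧ j = 0
      · obtain ⟨ha, hb, hc2⟩ := h1
        have hδ : -β = δ := neg_eq_of_add_eq_zero_left ha
        rw [if_pos ⟨ha, hb, hc2⟩, if_pos hc2, if_pos (⟨hδ, by omega⟩ : -β = δ ∧ (0:ℤ) = m)]
        have : (δ:ℂ) = -(β:ℂ) := by rw [← hδ]; push_cast; ring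
        rw [this]; ring
      · rw [if_neg h1]
        by_cases h3 : j = 0
        · rw [if_pos h3]
          by_cases h4 : -β = δ ∧ (0:ℤ) = m
          · exfalso
            refine h1 ⟨?_, by omega, h3⟩
            rw [← h4.1]; abel
          · rw [if_neg h4]; ring
        · rw [if_neg h3]; ring
  have := LinearMap.congr_fun key v
  rw [LinearMap.comp_apply, brkR_apply] at this
  rw [this, LinearMap.smul_apply, smul_eq_mul]

lemma exG [Nontrivial G] (s : Finset ℂ) : ∃ α : G, (α:ℂ) ∉ s := by
  obtain ⟨t, ht⟩ := exists_ne (0 : G)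
  have htc : (t:ℂ) ≠ 0 := by
    intro h; exact ht (by ext; simpa using h)
  have hinj : Function.Injective (fun k : ℕ => ((k • t : G) : ℂ)) := by
    intro a b hab
    simp only at hab
    push_cast at hab
    rw [nsmul_eq_mul, nsmul_eq_mul] at hab
    exact_mod_cast mul_right_cancel₀ htc hab
  have hinf : (Set.range (fun k : ℕ => ((k • t : G) : ℂ))).Infinite :=
    Set.infinite_range_of_injective hinj
  obtain ⟨x, hx, hxs⟩ := hinf.exists_notMem_finset s
  obtain ⟨k, rfl⟩ := hx
  exact ⟨k • t, hxs⟩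

lemma central_phi (bas : Module.Basis (WhatIdx G) ℂ Lg) (hLL : HLL bas) (hC : HCc bas)
    (v : Lg) (hv : ∀ x : Lg, ⁅v, x⁆ = 0) (γ : G) (n : ℤ) : phiL bas γ n v = 0 := by
  have h0 := phi_brk bas hLL hC 0 0 γ (n+1) v
  have h1 := phi_brk bas hLL hC 0 1 γ (n+2) v
  rw [hv] at h0 h1
  rw [map_zero] at h0 h1
  push_cast at h0 h1
  rw [sub_zero] at h0 h1
  rw [show n+1-(0:ℤ) = n+1 by ring] at h0
  rw [show n+1-(1:ℤ) = n by ring] at h0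
  rw [show n+2-(1:ℤ) = n+1 by ring] at h1
  rw [show n+1-(1:ℤ) = n by ring] at h1
  linear_combination h0 - h1

lemma mulC_central (bas : Module.Basis (WhatIdx G) ℂ Lg) (hC : HCc bas)
    (mul : Lg →ₗ[ℂ] Lg →ₗ[ℂ] Lg)
    (hcompat : ∀ x y z : Lg, (2 : ℂ) • mul z ⁅x, y⁆ = ⁅mul z x, y⁆ + ⁅x, mul z y⁆)
    (z x : Lg) : ⁅mul z (bas WhatIdx.C), x⁆ = 0 := by
  have h := hcompat (bas WhatIdx.C) x z
  rw [hC x, map_zero, smul_zero, hC (mul z x), add_zero] at h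
  exact h.symm

lemma central_form (bas : Module.Basis (WhatIdx G) ℂ Lg) (v : Lg)
    (hφ : ∀ (γ : G) (n : ℤ), phiL bas γ n v = 0) : v = psiL bas v • bas WhatIdx.C := by
  apply bas.ext_elem
  intro idx
  rw [map_smul]
  cases idx with
  | L γ m =>
    have h1 := hφ γ (m : ℤ)
    rw [phiL_nat] at h1
    rw [h1]
    simp [Module.Basis.repr_self_apply]
  | C =>
    simp [psiL, Module.Basis.repr_self_apply]

lemma mulC_zero (bas : Module.Basis (WhatIdx G) ℂ Lg) [Nontrivial G] (hLL : HLL bas) (hC : HCc bas)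
    (mul : Lg →ₗ[ℂ] Lg →ₗ[ℂ] Lg)
    (hcomm : ∀ x y : Lg, mul x y = mul y x)
    (hcompat : ∀ x y z : Lg, (2 : ℂ) • mul z ⁅x, y⁆ = ⁅mul z x, y⁆ + ⁅x, mul z y⁆) :
    ∀ z : Lg, mul z (bas WhatIdx.C) = 0 := by
  classical
  set cb := bas WhatIdx.C with hcb
  have hform : ∀ z : Lg, mul z cb = psiL bas (mul z cb) • cb := by
    intro z
    exact central_form bas _ (fun γ n => central_phi bas hLL hC _
      (mulC_central bas hC mul hcompat z) γ n)
  set μ : Lg → ℂ := fun w => psiL bas (mul w cb) with hμ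
  have hμbrk : ∀ x y : Lg, mul cb ⁅x, y⁆ = 0 := by
    intro x y
    have h := hcompat x y cb
    have hx : mul cb x = μ x • cb := by rw [hcomm]; exact hform x
    have hy : mul cb y = μ y • cb := by rw [hcomm]; exact hform y
    rw [hx, hy, smul_lie, lie_smul, hC y, ← lie_skew x cb, hC x] at h
    simp only [smul_zero, neg_zero, add_zero] at h
    have h3 : ((2:ℂ)⁻¹ * 2) • mul cb ⁅x, y⁆ = 0 := by rw [mul_smul, h, smul_zero]
    rw [show ((2:ℂ)⁻¹ * 2) = 1 by norm_num, one_smul] at h3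
    exact h3
  have key : ∀ (α β : G) (i j : ℕ),
      ((β:ℂ)-α) * μ (bas (WhatIdx.L (α+β) (i+j))) + ((j:ℂ)-i) * μ (bas (WhatIdx.L (α+β) (i+j+1)))
      + (if α+β=0 ∧ i=0 ∧ j=0 then ((α:ℂ)^3-α)/12 else 0) * μ cb = 0 := by
    intro α β i j
    have h := hμbrk (bas (WhatIdx.L α i)) (bas (WhatIdx.L β j))
    rw [hLL α β i j, map_add, map_add, map_smul, map_smul, map_smul] at h
    have e1 : mul cb (bas (WhatIdx.L (α+β) (i+j))) = μ (bas (WhatIdx.L (α+β) (i+j))) • cb := by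
      rw [hcomm]; exact hform _
    have e2 : mul cb (bas (WhatIdx.L (α+β) (i+j+1))) = μ (bas (WhatIdx.L (α+β) (i+j+1))) • cb := by
      rw [hcomm]; exact hform _
    have e3 : mul cb cb = μ cb • cb := hform cb
    rw [e1, e2, e3] at h
    have hpsiC : psiL bas cb = 1 := by rw [hcb]; exact psiL_C bas
    have := congrArg (psiL bas) h
    simp only [map_add, map_smul, map_zero, smul_eq_mul, hpsiC, mul_one] at this
    linear_combination this
  obtain ⟨t, ht⟩ := exists_ne (0 : G)
  have htc : (t:ℂ) ≠ 0 := fun h => ht (by ext; simpa using h)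
  -- μ (L σ m) = 0 for all σ m
  have hL : ∀ (σ : G) (m : ℕ), μ (bas (WhatIdx.L σ m)) = 0 := by
    intro σ m
    by_cases hσm : σ = 0 ∧ m = 0
    · obtain ⟨rfl, rfl⟩ := hσm
      have h1 := key t (-t) 0 0
      have h2 := key (t+t) (-(t+t)) 0 0
      rw [add_neg_cancel] at h1 h2
      rw [if_pos ⟨rfl, rfl, rfl⟩] at h1 h2
      push_cast at h1 h2
      -- h1 : (-t - t) * μ(L 0 0) + 0 + (t^3 - t)/12 * μ cb = 0
      -- h2 : (-(2t) - 2t) * μ(L 0 0) + ((2t)^3 - 2t)/12 * μ cb = 0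
      have hν : μ cb = 0 := by
        have ht3 : (t:ℂ)^3 ≠ 0 := pow_ne_zero 3 htc
        have : (t:ℂ)^3 * μ cb = 0 := by linear_combination 2 * h2 - 4 * h1
        exact (mul_eq_zero.mp this).resolve_left ht3
      rw [hν] at h1
      have : (-(t:ℂ)-t) * μ (bas (WhatIdx.L 0 0)) = 0 := by linear_combination h1
      rcases mul_eq_zero.mp this with h | h
      · exfalso; apply htc; linear_combination (-1/2) * h
      · exact h
    · -- non-central cases
      have h1 := key 0 σ 0 m
      have h2 := key t (σ - t) 0 m
      rw [zero_add] at h1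
      rw [show t + (σ - t) = σ by abel] at h2
      simp only [zero_add] at h1 h2
      rw [if_neg (show ¬ ((σ:G) = 0 ∧ True ∧ m = 0) by tauto)] at h1
      rw [if_neg (show ¬ ((σ:G) = 0 ∧ True ∧ m = 0) by tauto)] at h2
      push_cast at h1 h2
      -- h1 : (σ - 0) * μ(σ,m) + m * μ(σ,m+1) = 0
      -- h2 : (σ - t - t) * μ(σ,m) + m * μ(σ,m+1) = 0
      have : (2*(t:ℂ)) * μ (bas (WhatIdx.L σ m)) = 0 := by linear_combination h1 - h2
      rcases mul_eq_zero.mp this with h | h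
      · exfalso; apply htc; linear_combination (1/2) * h
      · exact h
  have hCb : μ cb = 0 := by
    have h1 := key t (-t) 0 0
    rw [add_neg_cancel, if_pos ⟨rfl, rfl, rfl⟩] at h1
    rw [hL 0 0] at h1
    push_cast at h1
    have ht3 : ((t:ℂ)^3 - t) ≠ 0 ∨ True := Or.inr trivial
    -- need another instance to kill μ cb since coefficient (t³-t) might vanish
    have h2 := key (t+t) (-(t+t)) 0 0
    rw [add_neg_cancel, if_pos ⟨rfl, rfl, rfl⟩] at h2
    rw [hL 0 0] at h2
    push_cast at h2
    have : (t:ℂ)^3 * μ cb = 0 := by linear_combination 2 * h2 - 4 * h1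
    exact (mul_eq_zero.mp this).resolve_left (pow_ne_zero 3 htc)
  -- conclude via linearity
  have hall : ∀ idx, mul (bas idx) cb = 0 := by
    intro idx
    cases idx with
    | L σ m => rw [hform (bas (WhatIdx.L σ m))]; rw [show psiL bas (mul (bas (WhatIdx.L σ m)) cb) = μ (bas (WhatIdx.L σ m)) from rfl, hL, zero_smul]
    | C => rw [← hcb, hform cb]; rw [show psiL bas (mul cb cb) = μ cb from rfl, hCb, zero_smul]
  intro z
  have : (mul.flip cb) = 0 := by
    apply bas.ext
    intro idx
    simpa using hall idx
  have := LinearMap.congr_fun this z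
  simpa using this


/-! ### Abstract classification of ½-derivation coefficient families -/

section Shift
variable {G : AddSubgroup ℂ}

/-- vanishing for negative second index -/
def Hneg (F : G → ℕ → G → ℤ → ℂ) : Prop :=
  ∀ (β : G) (j : ℕ) (γ : G) (n : ℤ), n < 0 → F β j γ n = 0

/-- the master equation satisfied by coefficients of `z · L_{β,j}` -/
def HME (F : G → ℕ → G → ℤ → ℂ) : Prop :=
  ∀ (α : G) (i : ℕ) (β : G) (j : ℕ) (γ : G) (n : ℤ),
    2*((β:ℂ)-(α:ℂ)) * F (α+β) (i+j) γ n + 2*((j:ℂ)-(i:ℂ)) * F (α+β) (i+j+1) γ n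
    = (2*(β:ℂ)-(γ:ℂ)) * F α i (γ-β) (n-(j:ℤ)) + (2*(j:ℂ)+1-(n:ℂ)) * F α i (γ-β) (n-j-1)
    + ((γ:ℂ)-2*(α:ℂ)) * F β j (γ-α) (n-(i:ℤ)) + ((n:ℂ)-2*(i:ℂ)-1) * F β j (γ-α) (n-i-1)

def HEX (G : AddSubgroup ℂ) : Prop := ∀ s : Finset ℂ, ∃ α : G, (α:ℂ) ∉ s

variable (F : G → ℕ → G → ℤ → ℂ)

lemma shift_rec0 (hME : HME F) (α γ : G) (m : ℤ) :
    ((γ:ℂ) - 2*α) * (F α 0 γ m - F 0 0 (γ-α) m)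
      + ((m:ℂ)-1) * (F α 0 γ (m-1) - F 0 0 (γ-α) (m-1)) = 0 := by
  have h := hME α 0 0 0 γ m
  simp only [add_zero, zero_add, sub_zero, Nat.cast_zero, Nat.cast_one,
    ZeroMemClass.coe_zero] at h
  linear_combination h

lemma shift0A (hneg : Hneg F) (hME : HME F) (α γ : G) (hne : (γ:ℂ) ≠ 2*(α:ℂ)) :
    ∀ n : ℤ, F α 0 γ n = F 0 0 (γ-α) n := by
  have hsub : ((γ:ℂ) - 2*α) ≠ 0 := sub_ne_zero.mpr hne
  have key : ∀ k : ℕ, F α 0 γ (k:ℤ) = F 0 0 (γ-α) (k:ℤ) := by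
    intro k
    induction k with
    | zero =>
      have h := shift_rec0 F hME α γ 0
      rw [hneg α 0 γ (0-1) (by norm_num), hneg 0 0 (γ-α) (0-1) (by norm_num)] at h
      have h2 : ((γ:ℂ)-2*α) * (F α 0 γ 0 - F 0 0 (γ-α) 0) = 0 := by linear_combination h
      have h3 := (mul_eq_zero.mp h2).resolve_left hsub
      rw [Nat.cast_zero]
      exact sub_eq_zero.mp h3
    | succ k ih =>
      have h := shift_rec0 F hME α γ ((k:ℤ)+1)
      rw [show (k:ℤ)+1-1 = (k:ℤ) by ring] at h
      rw [ih] at h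
      have h2 : ((γ:ℂ)-2*α) * (F α 0 γ ((k:ℤ)+1) - F 0 0 (γ-α) ((k:ℤ)+1)) = 0 := by
        linear_combination h
      have h3 := (mul_eq_zero.mp h2).resolve_left hsub
      rw [show ((k+1:ℕ):ℤ) = (k:ℤ)+1 by push_cast; ring]
      exact sub_eq_zero.mp h3
  intro n
  rcases lt_or_ge n 0 with hn | hn
  · rw [hneg _ _ _ _ hn, hneg _ _ _ _ hn]
  · have := key n.toNat
    rwa [Int.toNat_of_nonneg hn] at this

lemma shift0B (hneg : Hneg F) (hME : HME F) (α γ : G) (n : ℤ) (hn : n ≠ 0) :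
    F α 0 γ n = F 0 0 (γ-α) n := by
  by_cases hne : (γ:ℂ) = 2*(α:ℂ)
  · have h := shift_rec0 F hME α γ (n+1)
    rw [show (n:ℤ)+1-1 = n by ring] at h
    rw [hne] at h
    have h2 : ((n:ℤ):ℂ) * (F α 0 γ n - F 0 0 (γ-α) n) = 0 := by
      push_cast at h ⊢; linear_combination h
    have hn' : ((n:ℤ):ℂ) ≠ 0 := Int.cast_ne_zero.mpr hn
    exact sub_eq_zero.mp ((mul_eq_zero.mp h2).resolve_left hn')
  · exact shift0A F hneg hME α γ hne n

lemma shift_diag (hneg : Hneg F) (hME : HME F) (hEX : HEX G) (β : G) :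
    F β 0 (β+β) 0 = F 0 0 β 0 := by
  obtain ⟨α, hα⟩ := hEX {0, (β:ℂ), (β:ℂ)/2}
  simp only [Finset.mem_insert, Finset.mem_singleton, not_or] at hα
  obtain ⟨h0, h1, h2⟩ := hα
  have h := hME α 0 (β-α) 0 (β+β) 0
  rw [show α + (β-α) = β from by abel] at h
  simp only [add_zero, zero_add, sub_zero, Nat.cast_zero, Nat.cast_one,
    ZeroMemClass.coe_zero, Int.cast_zero] at h
  rw [hneg α 0 ((β+β)-(β-α)) (0-1) (by norm_num),
    hneg (β-α) 0 ((β+β)-α) (0-1) (by norm_num)] at h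
  rw [show (β+β)-(β-α) = β+α from by abel] at h
  have e1 : F α 0 (β+α) 0 = F 0 0 β 0 := by
    have hne : ((β+α : G):ℂ) ≠ 2*(α:ℂ) := by
      push_cast
      intro hc
      exact h1 (by linear_combination -hc)
    have := shift0A F hneg hME α (β+α) hne 0
    rwa [show β+α-α = β from by abel] at this
  have e2 : F (β-α) 0 ((β+β)-α) 0 = F 0 0 β 0 := by
    have hne : (((β+β)-α : G):ℂ) ≠ 2*((β-α : G):ℂ) := by
      push_cast
      intro hc
      exact h0 (by linear_combination hc)
    have := shift0A F hneg hME (β-α) ((β+β)-α) hne 0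
    rwa [show (β+β)-α-(β-α) = β from by abel] at this
  rw [e1, e2] at h
  have hcoef : (2*(((β-α):G):ℂ)-2*(α:ℂ)) ≠ 0 := by
    push_cast
    intro hc
    exact h2 (by linear_combination -hc/4)
  have h3 : (2*(((β-α):G):ℂ)-2*(α:ℂ)) * (F β 0 (β+β) 0 - F 0 0 β 0) = 0 := by
    push_cast at h ⊢; linear_combination h
  exact sub_eq_zero.mp ((mul_eq_zero.mp h3).resolve_left hcoef)

lemma shiftj0 (hneg : Hneg F) (hME : HME F) (hEX : HEX G) (β γ : G) (n : ℤ) :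
    F β 0 γ n = F 0 0 (γ-β) n := by
  by_cases hc : (γ:ℂ) = 2*(β:ℂ) ∧ n = 0
  · obtain ⟨hc1, hc2⟩ := hc
    have hγ : γ = β + β := by
      apply Subtype.ext
      push_cast
      linear_combination hc1
    subst hc2
    rw [hγ, show β+β-β = β from by abel]
    exact shift_diag F hneg hME hEX β
  · rcases not_and_or.mp hc with h | h
    · exact shift0A F hneg hME β γ h n
    · exact shift0B F hneg hME β γ n h


noncomputable def Gf (F : G → ℕ → G → ℤ → ℂ) (b d : G) (n : ℤ) : ℂ :=
  F b 1 (d+b) n - F 0 0 d (n-1)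

lemma X12 (hneg : Hneg F) (hME : HME F) (hEX : HEX G) (β ν δ : G) (n : ℤ) :
    ((δ:ℂ)+β-3*ν) * Gf F (β+ν) δ n + ((n:ℂ)-1) * Gf F (β+ν) δ (n-1)
    = ((δ:ℂ)+β-ν) * Gf F β δ n + ((n:ℂ)-1) * Gf F β δ (n-1) := by
  have hX := hME ν 0 β 1 (δ+(β+ν)) n
  have hXI := hME 0 0 (β+ν) 1 (δ+(β+ν)) n
  simp only [add_zero, zero_add, sub_zero, Nat.cast_zero, Nat.cast_one,
    ZeroMemClass.coe_zero] at hX hXI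
  rw [show ν+β = β+ν from by abel] at hX
  rw [show δ+(β+ν)-β = δ+ν from by abel, show δ+(β+ν)-ν = δ+β from by abel] at hX
  rw [shiftj0 F hneg hME hEX ν (δ+ν) (n-1), shiftj0 F hneg hME hEX ν (δ+ν) (n-1-1)] at hX
  rw [show δ+ν-ν = δ from by abel] at hX
  rw [show δ+(β+ν)-(β+ν) = δ from by abel] at hXI
  push_cast at hX hXI
  simp only [Gf]
  linear_combination hX - hXI

lemma Gf_ne (hneg : Hneg F) (hME : HME F) (hEX : HEX G) (β : G) (hβ : (β:ℂ) ≠ 0)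
    (δ : G) (n : ℤ) : Gf F β δ n = 0 := by
  have heq : ∀ m : ℤ, Gf F (β+β) δ m = Gf F β δ m := by
    intro m
    have hA := X12 F hneg hME hEX β β δ m
    have hB := X12 F hneg hME hEX (β+β) (-β) δ m
    rw [show β+β+(-β) = β from by abel] at hB
    push_cast at hA hB
    have h5 : 5*(β:ℂ) * (Gf F β δ m - Gf F (β+β) δ m) = 0 := by linear_combination hA + hB
    have h5' : (5:ℂ)*(β:ℂ) ≠ 0 := by
      intro hc
      rcases mul_eq_zero.mp hc with h | h
      · norm_num at h
      · exact hβ h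
    have h6 : ((5:ℂ)*(β:ℂ)) * (Gf F β δ m - Gf F (β+β) δ m) = 0 := by linear_combination h5
    exact (sub_eq_zero.mp ((mul_eq_zero.mp h6).resolve_left h5')).symm
  have hA := X12 F hneg hME hEX β β δ n
  rw [heq n, heq (n-1)] at hA
  push_cast at hA
  have h2 : (2*(β:ℂ)) * Gf F β δ n = 0 := by linear_combination -hA
  have h2' : 2*(β:ℂ) ≠ 0 := by
    intro hc
    rcases mul_eq_zero.mp hc with h | h
    · norm_num at h
    · exact hβ h
  exact (mul_eq_zero.mp h2).resolve_left h2'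

lemma Gf_all (hneg : Hneg F) (hME : HME F) (hEX : HEX G) (β δ : G) (n : ℤ) :
    Gf F β δ n = 0 := by
  by_cases hβ : (β:ℂ) = 0
  · have hβ0 : β = 0 := Subtype.ext (by simpa using hβ)
    subst hβ0
    obtain ⟨ν₁, hν₁⟩ := hEX {0}
    obtain ⟨ν₂, hν₂⟩ := hEX {0, (ν₁:ℂ)}
    simp only [Finset.mem_insert, Finset.mem_singleton, not_or] at hν₁ hν₂
    have hI : ∀ (ν : G), (ν:ℂ) ≠ 0 → ∀ m : ℤ,
        ((δ:ℂ)-ν) * Gf F 0 δ m + ((m:ℂ)-1) * Gf F 0 δ (m-1) = 0 := by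
      intro ν hν m
      have h := X12 F hneg hME hEX 0 ν δ m
      rw [zero_add] at h
      rw [Gf_ne F hneg hME hEX ν hν δ m, Gf_ne F hneg hME hEX ν hν δ (m-1)] at h
      push_cast at h
      linear_combination -h
    have h1 := hI ν₁ hν₁ n
    have h2 := hI ν₂ hν₂.1 n
    have h3 : ((ν₂:ℂ)-ν₁) * Gf F 0 δ n = 0 := by linear_combination h1 - h2
    have h3' : ((ν₂:ℂ)-ν₁) ≠ 0 := sub_ne_zero.mpr hν₂.2
    exact (mul_eq_zero.mp h3).resolve_left h3'
  · exact Gf_ne F hneg hME hEX β hβ δ n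

lemma shiftj1 (hneg : Hneg F) (hME : HME F) (hEX : HEX G) (β γ : G) (n : ℤ) :
    F β 1 γ n = F 0 0 (γ-β) (n-1) := by
  have := Gf_all F hneg hME hEX β (γ-β) n
  rw [Gf] at this
  rw [show γ-β+β = γ from by abel] at this
  exact sub_eq_zero.mp this



lemma shift_all (hneg : Hneg F) (hME : HME F) (hEX : HEX G) :
    ∀ (j : ℕ) (β γ : G) (n : ℤ), F β j γ n = F 0 0 (γ-β) (n-(j:ℤ)) := by
  intro j
  induction j with
  | zero =>
    intro β γ n
    rw [show n-((0:ℕ):ℤ) = n by push_cast; ring]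
    exact shiftj0 F hneg hME hEX β γ n
  | succ j ih =>
    rcases Nat.eq_zero_or_pos j with rfl | hj
    · intro β γ n
      rw [show n-((0+1:ℕ):ℤ) = n-1 by push_cast; ring]
      exact shiftj1 F hneg hME hEX β γ n
    · intro β γ n
      have h := hME 0 0 β j γ n
      simp only [add_zero, zero_add, sub_zero, Nat.cast_zero, ZeroMemClass.coe_zero] at h
      rw [ih β γ n, ih β γ (n-1)] at h
      rw [show n-1-(j:ℤ) = n-j-1 by ring] at h
      have hj' : ((j:ℕ):ℂ) ≠ 0 := Nat.cast_ne_zero.mpr (by omega)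
      have h2 : (2*((j:ℕ):ℂ)) * (F β (j+1) γ n - F 0 0 (γ-β) (n-j-1)) = 0 := by
        linear_combination h
      have h2' : (2*((j:ℕ):ℂ)) ≠ 0 := by
        intro hc
        rcases mul_eq_zero.mp hc with hcc | hcc
        · norm_num at hcc
        · exact hj' hcc
      have h3 := sub_eq_zero.mp ((mul_eq_zero.mp h2).resolve_left h2')
      rw [h3, show n-((j+1:ℕ):ℤ) = n-j-1 by push_cast; ring]

end Shift

/-! ### Bridge: the product coefficients satisfy the master equation -/

variable {G : AddSubgroup ℂ} {Lg : Type*} [LieRing Lg] [LieAlgebra ℂ Lg]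

noncomputable def Fz (bas : Module.Basis (WhatIdx G) ℂ Lg) (mul : Lg →ₗ[ℂ] Lg →ₗ[ℂ] Lg) (z : Lg)
    (β : G) (j : ℕ) (γ : G) (n : ℤ) : ℂ :=
  phiL bas γ n (mul z (bas (WhatIdx.L β j)))

noncomputable def gz (bas : Module.Basis (WhatIdx G) ℂ Lg) (mul : Lg →ₗ[ℂ] Lg →ₗ[ℂ] Lg) (z : Lg)
    (β : G) (j : ℕ) : ℂ :=
  psiL bas (mul z (bas (WhatIdx.L β j)))

lemma Fz_neg (bas : Module.Basis (WhatIdx G) ℂ Lg) (mul : Lg →ₗ[ℂ] Lg →ₗ[ℂ] Lg) (z : Lg) :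
    Hneg (Fz bas mul z) := fun β j γ n hn => phiL_neg bas γ hn _

lemma Fz_hME (bas : Module.Basis (WhatIdx G) ℂ Lg) (hLL : HLL bas) (hC : HCc bas)
    (mul : Lg →ₗ[ℂ] Lg →ₗ[ℂ] Lg)
    (hcompat : ∀ x y z : Lg, (2 : ℂ) • mul z ⁅x, y⁆ = ⁅mul z x, y⁆ + ⁅x, mul z y⁆)
    (hzC : ∀ z : Lg, mul z (bas WhatIdx.C) = 0) (z : Lg) :
    HME (Fz bas mul z) := by
  intro α i β j γ n
  have h := hcompat (bas (WhatIdx.L α i)) (bas (WhatIdx.L β j)) z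
  have hLL' := hLL
  simp only [HLL] at hLL'
  rw [hLL' α β i j] at h
  rw [map_add, map_add, map_smul, map_smul, map_smul, hzC z, smul_zero, add_zero] at h
  rw [← lie_skew (bas (WhatIdx.L α i)) (mul z (bas (WhatIdx.L β j)))] at h
  have h2 := congrArg (phiL bas γ n) h
  rw [map_smul, map_add, map_add, map_smul, map_smul, map_neg] at h2
  rw [phi_brk bas hLL hC β j γ n (mul z (bas (WhatIdx.L α i)))] at h2
  rw [phi_brk bas hLL hC α i γ n (mul z (bas (WhatIdx.L β j)))] at h2
  simp only [smul_eq_mul] at h2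
  simp only [Fz]
  linear_combination h2

lemma gz_MC (bas : Module.Basis (WhatIdx G) ℂ Lg) (hLL : HLL bas) (hC : HCc bas)
    (mul : Lg →ₗ[ℂ] Lg →ₗ[ℂ] Lg)
    (hcompat : ∀ x y z : Lg, (2 : ℂ) • mul z ⁅x, y⁆ = ⁅mul z x, y⁆ + ⁅x, mul z y⁆)
    (hzC : ∀ z : Lg, mul z (bas WhatIdx.C) = 0) (z : Lg) (α β : G) (i j : ℕ) :
    2*((β:ℂ)-α) * gz bas mul z (α+β) (i+j) + 2*((j:ℂ)-(i:ℂ)) * gz bas mul z (α+β) (i+j+1)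
    = (if j = 0 then ((β:ℂ)-(β:ℂ)^3)/12 else 0) * Fz bas mul z α i (-β) 0
      + (if i = 0 then ((α:ℂ)^3-(α:ℂ))/12 else 0) * Fz bas mul z β j (-α) 0 := by
  have h := hcompat (bas (WhatIdx.L α i)) (bas (WhatIdx.L β j)) z
  have hLL' := hLL
  simp only [HLL] at hLL'
  rw [hLL' α β i j] at h
  rw [map_add, map_add, map_smul, map_smul, map_smul, hzC z, smul_zero, add_zero] at h
  rw [← lie_skew (bas (WhatIdx.L α i)) (mul z (bas (WhatIdx.L β j)))] at h
  have h2 := congrArg (psiL bas) h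
  rw [map_smul, map_add, map_add, map_smul, map_smul, map_neg] at h2
  rw [psi_brk bas hLL hC β j (mul z (bas (WhatIdx.L α i)))] at h2
  rw [psi_brk bas hLL hC α i (mul z (bas (WhatIdx.L β j)))] at h2
  simp only [smul_eq_mul] at h2
  simp only [gz, Fz]
  split_ifs at h2 ⊢ <;> linear_combination h2

lemma Fz00_zero (bas : Module.Basis (WhatIdx G) ℂ Lg) [Nontrivial G] (hLL : HLL bas) (hC : HCc bas)
    (mul : Lg →ₗ[ℂ] Lg →ₗ[ℂ] Lg)
    (hcompat : ∀ x y z : Lg, (2 : ℂ) • mul z ⁅x, y⁆ = ⁅mul z x, y⁆ + ⁅x, mul z y⁆)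
    (hzC : ∀ z : Lg, mul z (bas WhatIdx.C) = 0) (z : Lg) (δ : G) :
    Fz bas mul z 0 0 δ 0 = 0 := by
  have hEX' : HEX G := fun s => exG (G := G) s
  have hsh := shift_all (Fz bas mul z) (Fz_neg bas mul z)
    (Fz_hME bas hLL hC mul hcompat hzC z) hEX'
  have E : ∀ a : G, 2*((-(δ:ℂ)-a)-a) * gz bas mul z (-δ) 0
      = ((-(δ:ℂ)-a)-(-(δ:ℂ)-a)^3)/12 * Fz bas mul z 0 0 δ 0
        + ((a:ℂ)^3-a)/12 * Fz bas mul z 0 0 δ 0 := by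
    intro a
    have h := gz_MC bas hLL hC mul hcompat hzC z a (-δ-a) 0 0
    rw [if_pos rfl, if_pos rfl] at h
    rw [show a + (-δ-a) = -δ from by abel] at h
    rw [hsh 0 a (-(-δ-a)) 0, hsh 0 (-δ-a) (-a) 0] at h
    rw [show -(-δ-a)-a = δ from by abel, show -a-(-δ-a) = δ from by abel] at h
    push_cast at h
    linear_combination h
  obtain ⟨t, ht0⟩ := exG (G := G) ({0} : Finset ℂ)
  simp only [Finset.mem_singleton] at ht0
  have E0 := E 0
  have E1 := E t
  have E2 := E (t+t)
  have E3 := E (t+t+t)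
  push_cast at E0 E1 E2 E3
  have hc : (t:ℂ)^3 * Fz bas mul z 0 0 δ 0 = 0 := by
    linear_combination E0 - 3*E1 + 3*E2 - E3
  exact (mul_eq_zero.mp hc).resolve_left (pow_ne_zero 3 ht0)

lemma gz_zero (bas : Module.Basis (WhatIdx G) ℂ Lg) [Nontrivial G] (hLL : HLL bas) (hC : HCc bas)
    (mul : Lg →ₗ[ℂ] Lg →ₗ[ℂ] Lg)
    (hcompat : ∀ x y z : Lg, (2 : ℂ) • mul z ⁅x, y⁆ = ⁅mul z x, y⁆ + ⁅x, mul z y⁆)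
    (hzC : ∀ z : Lg, mul z (bas WhatIdx.C) = 0) (z : Lg) (σ : G) (j : ℕ) :
    gz bas mul z σ j = 0 := by
  have hEX' : HEX G := fun s => exG (G := G) s
  have hsh := shift_all (Fz bas mul z) (Fz_neg bas mul z)
    (Fz_hME bas hLL hC mul hcompat hzC z) hEX'
  obtain ⟨t, ht0⟩ := exG (G := G) ({0} : Finset ℂ)
  simp only [Finset.mem_singleton] at ht0
  rcases Nat.eq_zero_or_pos j with rfl | hj
  · -- j = 0 : the Fz-parts vanish by `Fz00_zero`
    have E : ∀ a : G, 2*((σ:ℂ)-2*a) * gz bas mul z σ 0 = 0 := by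
      intro a
      have h := gz_MC bas hLL hC mul hcompat hzC z a (σ-a) 0 0
      rw [if_pos rfl, if_pos rfl] at h
      rw [show a + (σ-a) = σ from by abel] at h
      rw [hsh 0 a (-(σ-a)) 0, hsh 0 (σ-a) (-a) 0] at h
      rw [show -(σ-a)-a = -σ from by abel, show -a-(σ-a) = -σ from by abel] at h
      simp only [Nat.cast_zero, sub_zero] at h
      rw [Fz00_zero bas hLL hC mul hcompat hzC z (-σ)] at h
      push_cast at h
      linear_combination h
    have h1 := E 0
    have h2 := E t
    push_cast at h1 h2
    have h3 : (4*(t:ℂ)) * gz bas mul z σ 0 = 0 := by linear_combination h1 - h2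
    have h4 : (4:ℂ)*(t:ℂ) ≠ 0 := by
      intro hcc
      rcases mul_eq_zero.mp hcc with hcc | hcc
      · norm_num at hcc
      · exact ht0 hcc
    exact (mul_eq_zero.mp h3).resolve_left h4
  · -- j ≥ 1
    have E : ∀ a : G, 2*((σ:ℂ)-2*a) * gz bas mul z σ j + 2*(j:ℂ) * gz bas mul z σ (j+1) = 0 := by
      intro a
      have h := gz_MC bas hLL hC mul hcompat hzC z a (σ-a) 0 j
      rw [if_neg (by omega), if_pos rfl] at h
      rw [show a + (σ-a) = σ from by abel] at h
      rw [hsh j (σ-a) (-a) 0] at h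
      rw [Fz_neg bas mul z 0 0 (-a-(σ-a)) (0-(j:ℤ)) (by omega)] at h
      push_cast at h
      simp only [zero_add] at h
      linear_combination h
    have h1 := E 0
    have h2 := E t
    push_cast at h1 h2
    have h3 : (4*(t:ℂ)) * gz bas mul z σ j = 0 := by linear_combination h1 - h2
    have h4 : (4:ℂ)*(t:ℂ) ≠ 0 := by
      intro hcc
      rcases mul_eq_zero.mp hcc with hcc | hcc
      · norm_num at hcc
      · exact ht0 hcc
    exact (mul_eq_zero.mp h3).resolve_left h4

end TP

open TP in
/-- every transposed Poisson structure on `Ŵ(G)` satisfies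
`C · x = 0` and `L_{α,i} · L_{β,j} = Σ_{d,k} a^{d,k} L_{d+α+β, k+i+j+1}` for
some finitely supported family `(a^{d,k})`, `d ∈ G`, `k ∈ ℤ_{≥0}`. -/
theorem transposedPoisson_What_structure
    (G : AddSubgroup ℂ) [Nontrivial G]
    (Lg : Type*) [LieRing Lg] [LieAlgebra ℂ Lg]
    (bas : Module.Basis (WhatIdx G) ℂ Lg)
    (hLL : ∀ (α β : G) (i j : ℕ),
      ⁅bas (WhatIdx.L α i), bas (WhatIdx.L β j)⁆ =
        ((β : ℂ) - (α : ℂ)) • bas (WhatIdx.L (α + β) (i + j)) +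
        ((j : ℂ) - (i : ℂ)) • bas (WhatIdx.L (α + β) (i + j + 1)) +
        (if α + β = 0 ∧ i = 0 ∧ j = 0 then ((α : ℂ) ^ 3 - (α : ℂ)) / 12
          else 0) • bas WhatIdx.C)
    (hC : ∀ x : Lg, ⁅bas WhatIdx.C, x⁆ = 0)
    (mul : Lg →ₗ[ℂ] Lg →ₗ[ℂ] Lg)
    (hcomm : ∀ x y : Lg, mul x y = mul y x)
    (hassoc : ∀ x y z : Lg, mul (mul x y) z = mul x (mul y z))
    (hcompat : ∀ x y z : Lg,
      (2 : ℂ) • mul z ⁅x, y⁆ = ⁅mul z x, y⁆ + ⁅x, mul z y⁆) :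
    (∀ x : Lg, mul (bas WhatIdx.C) x = 0) ∧
    ∃ a : G × ℕ →₀ ℂ, ∀ (α β : G) (i j : ℕ),
      mul (bas (WhatIdx.L α i)) (bas (WhatIdx.L β j)) =
        a.sum (fun p c => c • bas (WhatIdx.L (p.1 + α + β) (p.2 + i + j + 1))) := by
  classical
  have hLL' : HLL bas := hLL
  have hC' : HCc bas := hC
  have hzC : ∀ z : Lg, mul z (bas WhatIdx.C) = 0 :=
    mulC_zero bas hLL' hC' mul hcomm hcompat
  have hCz : ∀ x : Lg, mul (bas WhatIdx.C) x = 0 := fun x => by rw [hcomm]; exact hzC x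
  refine ⟨hCz, ?_⟩
  have hEX' : HEX G := fun s => exG (G := G) s
  have hsh : ∀ z : Lg, ∀ (j : ℕ) (β γ : G) (n : ℤ),
      Fz bas mul z β j γ n = Fz bas mul z 0 0 (γ-β) (n-(j:ℤ)) :=
    fun z => shift_all _ (Fz_neg bas mul z) (Fz_hME bas hLL' hC' mul hcompat hzC z) hEX'
  have key : ∀ (α β : G) (i j : ℕ) (γ : G) (n : ℤ),
      phiL bas γ n (mul (bas (WhatIdx.L α i)) (bas (WhatIdx.L β j)))
      = Fz bas mul (bas (WhatIdx.L 0 0)) 0 0 (γ-α-β) ((n-i)-j) := by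
    intro α β i j γ n
    have h1 : phiL bas γ n (mul (bas (WhatIdx.L α i)) (bas (WhatIdx.L β j)))
        = Fz bas mul (bas (WhatIdx.L α i)) β j γ n := rfl
    rw [h1, hsh (bas (WhatIdx.L α i)) j β γ n]
    have h2 : Fz bas mul (bas (WhatIdx.L α i)) 0 0 (γ-β) (n-(j:ℤ))
        = Fz bas mul (bas (WhatIdx.L 0 0)) α i (γ-β) (n-(j:ℤ)) := by
      simp only [Fz]
      rw [hcomm]
    rw [h2, hsh (bas (WhatIdx.L 0 0)) i α (γ-β) (n-(j:ℤ))]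
    rw [show γ-β-α = γ-α-β from by abel, show n-(j:ℤ)-(i:ℤ) = (n-i)-j from by ring]
  have h00neg : ∀ (d : G) (m : ℤ), m ≤ 0 →
      Fz bas mul (bas (WhatIdx.L 0 0)) 0 0 d m = 0 := by
    intro d m hm
    rcases lt_or_eq_of_le hm with hlt | heq
    · exact Fz_neg bas mul _ 0 0 d m hlt
    · rw [heq]
      exact Fz00_zero bas hLL' hC' mul hcompat hzC _ d
  have hinj : Function.Injective (fun p : G × ℕ => (WhatIdx.L p.1 (p.2+1) : WhatIdx G)) := by
    rintro ⟨d1, k1⟩ ⟨d2, k2⟩ hh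
    simp only at hh
    injection hh with e1 e2
    exact Prod.ext e1 (by omega)
  set r := bas.repr (mul (bas (WhatIdx.L 0 0)) (bas (WhatIdx.L 0 0))) with hr
  set a : G × ℕ →₀ ℂ :=
    Finsupp.comapDomain (fun p : G × ℕ => (WhatIdx.L p.1 (p.2+1) : WhatIdx G)) r hinj.injOn
    with ha
  have haval : ∀ (d : G) (k : ℕ),
      a (d, k) = Fz bas mul (bas (WhatIdx.L 0 0)) 0 0 d ((k:ℤ)+1) := by
    intro d k
    rw [ha]
    rw [Finsupp.comapDomain_apply]
    rw [hr]
    have : ((k:ℤ)+1) = ((k+1 : ℕ) : ℤ) := by push_cast; ring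
    rw [this]
    rw [Fz, phiL_nat]
  refine ⟨a, ?_⟩
  intro α β i j
  apply bas.ext_elem
  intro idx
  rw [map_finsuppSum]
  rw [Finsupp.sum_apply]
  simp only [map_smul, Finsupp.smul_apply, Module.Basis.repr_self_apply, smul_eq_mul]
  cases idx with
  | C =>
    have hLhs : bas.repr ((mul (bas (WhatIdx.L α i))) (bas (WhatIdx.L β j))) WhatIdx.C
        = gz bas mul (bas (WhatIdx.L α i)) β j := rfl
    rw [hLhs, gz_zero bas hLL' hC' mul hcompat hzC _ β j]
    refine (Finset.sum_eq_zero ?_).symm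
    intro p _
    dsimp only
    rw [if_neg (by simp)]
    ring
  | L γ m =>
    have hLhs : bas.repr ((mul (bas (WhatIdx.L α i))) (bas (WhatIdx.L β j))) (WhatIdx.L γ m)
        = Fz bas mul (bas (WhatIdx.L 0 0)) 0 0 (γ-α-β) (((m:ℤ)-i)-j) := by
      rw [← phiL_nat bas γ m]
      exact key α β i j γ m
    rw [hLhs]
    by_cases hm : i + j + 1 ≤ m
    · have hcond : ∀ p : G × ℕ,
          (WhatIdx.L (p.1 + α + β) (p.2 + i + j + 1) = WhatIdx.L γ m) ↔
          p = (γ - α - β, m - i - j - 1) := by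
        rintro ⟨d, k⟩
        constructor
        · intro hh
          injection hh with e1 e2
          have : d = γ - α - β := by rw [← e1]; abel
          exact Prod.ext this (by omega)
        · rintro hh
          injection hh with e1 e2
          subst e1; subst e2
          simp only
          congr 1
          · abel
          · omega
      have hsum : (a.sum fun p c =>
          c * (if WhatIdx.L (p.1 + α + β) (p.2 + i + j + 1) = WhatIdx.L γ m then 1 else 0))
          = a (γ - α - β, m - i - j - 1) := by
        rw [Finsupp.sum_eq_single (γ - α - β, m - i - j - 1)]
        · rw [if_pos ((hcond _).mpr rfl), mul_one]
        · intro p _ hp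
          rw [if_neg (fun hh => hp ((hcond p).mp hh)), mul_zero]
        · intro _
          ring
      rw [hsum, haval]
      congr 1
      omega
    · rw [h00neg _ _ (by omega)]
      refine (Finset.sum_eq_zero ?_).symm
      rintro ⟨d, k⟩ _
      dsimp only
      rw [if_neg (fun hh => by injection hh with e1 e2; omega), mul_zero]
end

section
/- Let G be a nontrivial additive subgroup of ℂ and let (a^{d,k}) be a finitely supported family of complex numbers indexed by d ∈ G and k ∈ ℤ_{≥0}. Define a bilinear multiplication · on the not-finitely graded Heisenberg–Virasoro algebra Ŵ(G) by L_{α,i} · L_{β,j} = Σ_{d ∈ G} Σ_{k ∈ ℤ_{≥0}} a^{d,k} L_{d+α+β, k+i+j+1} and C · L_{α,i} = L_{α,i} · C = C · C = 0. Then · is commutative and associative and is a transposed Poisson structure on Ŵ(G) (i.e. 2 z·[x,y] = [z·x, y] + [x, z·y] for all x, y, z). Moreover, if some a^{d,k} ≠ 0, then (Ŵ(G), ·, [·,·]) is not a Poisson algebra, i.e. the Leibniz rule [x, y·z] = [x,y]·z + y·[x,z] fails for some x, y, z. -/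
open scoped Classical

/-- Induction principle from a basis. -/
private lemma basis_ind {R M ι : Type*} [Semiring R] [AddCommMonoid M] [Module R M]
    (b : Module.Basis ι R M) {P : M → Prop}
    (hb : ∀ i, P (b i)) (h0 : P 0)
    (hadd : ∀ u v, P u → P v → P (u + v))
    (hsmul : ∀ (c : R) u, P u → P (c • u)) : ∀ x, P x := by
  intro x
  have hx : x ∈ Submodule.span R (Set.range b) := by rw [b.span_eq]; trivial
  refine Submodule.span_induction (p := fun x _ => P x) ?_ h0 ?_ ?_ hx
  · rintro y ⟨i, rfl⟩; exact hb i
  · intro u v _ _ hu hv; exact hadd u v hu hv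
  · intro c u _ hu; exact hsmul c u hu

/-- for any finitely supported family `(a^{d,k})`, `d ∈ G`,
`k ∈ ℤ_{≥0}`, the bilinear multiplication on `Ŵ(G)` given on the basis by
`L_{α,i} · L_{β,j} = Σ_{d,k} a^{d,k} L_{d+α+β, k+i+j+1}` and
`C · L_{α,i} = L_{α,i} · C = C · C = 0` is commutative and associative and is
a transposed Poisson structure on `Ŵ(G)`; moreover if some `a^{d,k} ≠ 0`,
then the Leibniz rule fails, i.e. the structure is not a Poisson algebra. -/
theorem transposedPoisson_What_construction
    (G : AddSubgroup ℂ) [Nontrivial G]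
    (Lg : Type*) [LieRing Lg] [LieAlgebra ℂ Lg]
    (bas : Module.Basis (WhatIdx G) ℂ Lg)
    (hLL : ∀ (α β : G) (i j : ℕ),
      ⁅bas (WhatIdx.L α i), bas (WhatIdx.L β j)⁆ =
        ((β : ℂ) - (α : ℂ)) • bas (WhatIdx.L (α + β) (i + j)) +
        ((j : ℂ) - (i : ℂ)) • bas (WhatIdx.L (α + β) (i + j + 1)) +
        (if α + β = 0 ∧ i = 0 ∧ j = 0 then ((α : ℂ) ^ 3 - (α : ℂ)) / 12
          else 0) • bas WhatIdx.C)
    (hC : ∀ x : Lg, ⁅bas WhatIdx.C, x⁆ = 0)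
    (a : G × ℕ →₀ ℂ)
    (mul : Lg →ₗ[ℂ] Lg →ₗ[ℂ] Lg)
    (hmulLL : ∀ (α β : G) (i j : ℕ),
      mul (bas (WhatIdx.L α i)) (bas (WhatIdx.L β j)) =
        a.sum (fun p c => c • bas (WhatIdx.L (p.1 + α + β) (p.2 + i + j + 1))))
    (hmulCL : ∀ (α : G) (i : ℕ), mul (bas WhatIdx.C) (bas (WhatIdx.L α i)) = 0)
    (hmulLC : ∀ (α : G) (i : ℕ), mul (bas (WhatIdx.L α i)) (bas WhatIdx.C) = 0)
    (hmulCC : mul (bas WhatIdx.C) (bas WhatIdx.C) = 0) :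
    (∀ x y : Lg, mul x y = mul y x) ∧
    (∀ x y z : Lg, mul (mul x y) z = mul x (mul y z)) ∧
    (∀ x y z : Lg,
      (2 : ℂ) • mul z ⁅x, y⁆ = ⁅mul z x, y⁆ + ⁅x, mul z y⁆) ∧
    (a ≠ 0 → ∃ x y z : Lg, ⁅x, mul y z⁆ ≠ mul ⁅x, y⁆ z + mul y ⁅x, z⁆) := by
  -- `mul` kills `C` on the left and on the right
  have mulCl : ∀ v : Lg, mul (bas WhatIdx.C) v = 0 := by
    refine basis_ind bas ?_ (map_zero _) ?_ ?_
    · rintro (⟨α, i⟩ | _)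
      · exact hmulCL α i
      · exact hmulCC
    · intro u v hu hv; rw [map_add, hu, hv, add_zero]
    · intro c u hu; rw [map_smul, hu, smul_zero]
  have mulCr : ∀ v : Lg, mul v (bas WhatIdx.C) = 0 := by
    refine basis_ind bas ?_ ?_ ?_ ?_
    · rintro (⟨α, i⟩ | _)
      · exact hmulLC α i
      · exact hmulCC
    · simp
    · intro u v hu hv; rw [map_add, LinearMap.add_apply, hu, hv, add_zero]
    · intro c u hu; rw [map_smul, LinearMap.smul_apply, hu, smul_zero]
  have lieCr : ∀ x : Lg, ⁅x, bas WhatIdx.C⁆ = 0 := by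
    intro x; rw [← lie_skew, hC, neg_zero]
  -- commutativity on basis vectors
  have comm_bas : ∀ i j : WhatIdx G, mul (bas i) (bas j) = mul (bas j) (bas i) := by
    rintro (⟨α, i⟩ | _) (⟨β, j⟩ | _)
    · rw [hmulLL, hmulLL]
      refine Finsupp.sum_congr fun p _ => ?_
      rw [add_right_comm p.1 α β, add_right_comm p.2 i j]
    · rw [hmulLC, hmulCL]
    · rw [hmulCL, hmulLC]
    · rfl
  have comm : ∀ x y : Lg, mul x y = mul y x := by
    refine basis_ind bas (P := fun x => ∀ y, mul x y = mul y x) ?_ ?_ ?_ ?_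
    · intro i
      refine basis_ind bas (P := fun y => mul (bas i) y = mul y (bas i))
        (comm_bas i) ?_ ?_ ?_
      · simp
      · intro u v hu hv
        simp only [map_add, LinearMap.add_apply, hu, hv]
      · intro c u hu
        simp only [map_smul, LinearMap.smul_apply, hu]
    · intro y; simp
    · intro u v hu hv y
      simp only [map_add, LinearMap.add_apply, hu, hv]
    · intro c u hu y
      simp only [map_smul, LinearMap.smul_apply, hu]
  -- associativity on basis vectors
  have assoc_bas : ∀ i j k : WhatIdx G,
      mul (mul (bas i) (bas j)) (bas k) = mul (bas i) (mul (bas j) (bas k)) := by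
    rintro (⟨α, i⟩ | _) (⟨β, j⟩ | _) (⟨γ, k⟩ | _)
    · rw [hmulLL, hmulLL]
      simp only [Finsupp.sum, map_sum, LinearMap.coe_sum, Finset.sum_apply,
        map_smul, LinearMap.smul_apply, hmulLL, Finset.smul_sum, smul_smul]
      refine Finset.sum_congr rfl fun p _ => Finset.sum_congr rfl fun q _ => ?_
      have h1 : q.1 + (p.1 + α + β) + γ = q.1 + α + (p.1 + β + γ) := by abel
      have h2 : q.2 + (p.2 + i + j + 1) + k + 1 = q.2 + i + (p.2 + j + k + 1) + 1 := by
        omega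
      rw [h1, h2]
    all_goals simp [mulCl, mulCr]
  have assoc : ∀ x y z : Lg, mul (mul x y) z = mul x (mul y z) := by
    refine basis_ind bas
      (P := fun x => ∀ y z, mul (mul x y) z = mul x (mul y z)) ?_ ?_ ?_ ?_
    · intro i
      refine basis_ind bas
        (P := fun y => ∀ z, mul (mul (bas i) y) z = mul (bas i) (mul y z)) ?_ ?_ ?_ ?_
      · intro j
        refine basis_ind bas
          (P := fun z => mul (mul (bas i) (bas j)) z = mul (bas i) (mul (bas j) z))
          (assoc_bas i j) ?_ ?_ ?_
        · simp
        · intro u v hu hv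
          simp only [map_add, hu, hv]
        · intro c u hu
          simp only [map_smul, hu]
      · intro z; simp
      · intro u v hu hv z
        simp only [map_add, LinearMap.add_apply, hu, hv]
      · intro c u hu z
        simp only [map_smul, LinearMap.smul_apply, hu]
    · intro y z; simp
    · intro u v hu hv y z
      simp only [map_add, LinearMap.add_apply, hu, hv]
    · intro c u hu y z
      simp only [map_smul, LinearMap.smul_apply, hu]
  have sum_lie' : ∀ (y : Lg) (s : Finset (G × ℕ)) (f : G × ℕ → Lg),
      ⁅∑ p ∈ s, f p, y⁆ = ∑ p ∈ s, ⁅f p, y⁆ := by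
    intro y s f
    induction s using Finset.cons_induction with
    | empty => simp
    | cons a s ha ih => rw [Finset.sum_cons, Finset.sum_cons, add_lie, ih]
  have lie_sum' : ∀ (y : Lg) (s : Finset (G × ℕ)) (f : G × ℕ → Lg),
      ⁅y, ∑ p ∈ s, f p⁆ = ∑ p ∈ s, ⁅y, f p⁆ := by
    intro y s f
    induction s using Finset.cons_induction with
    | empty => simp
    | cons a s ha ih => rw [Finset.sum_cons, Finset.sum_cons, lie_add, ih]
  -- transposed Poisson identity on basis vectors
  have tp_bas : ∀ i j k : WhatIdx G,
      (2 : ℂ) • mul (bas k) ⁅bas i, bas j⁆ =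
        ⁅mul (bas k) (bas i), bas j⁆ + ⁅bas i, mul (bas k) (bas j)⁆ := by
    rintro (⟨α, i⟩ | _) (⟨β, j⟩ | _) (⟨γ, k⟩ | _)
    · rw [hLL α β i j, map_add, map_add, map_smul, map_smul, map_smul, hmulLC,
        smul_zero, add_zero, hmulLL γ (α + β) k (i + j), hmulLL γ (α + β) k (i + j + 1),
        hmulLL γ α k i, hmulLL γ β k j]
      simp only [Finsupp.sum, Finset.smul_sum, smul_smul, sum_lie', lie_sum', smul_lie,
        lie_smul, hLL, smul_add, ← Finset.sum_add_distrib]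
      refine Finset.sum_congr rfl fun p hp => ?_
      rw [if_neg (by rintro ⟨-, h1, h2⟩; omega), if_neg (by rintro ⟨-, h1, h2⟩; omega)]
      have hg1 : p.1 + γ + α + β = p.1 + γ + (α + β) := by abel
      have hg2 : α + (p.1 + γ + β) = p.1 + γ + (α + β) := by abel
      have hn1 : p.2 + k + i + 1 + j = p.2 + k + (i + j) + 1 := by omega
      have hn3 : i + (p.2 + k + j + 1) = p.2 + k + (i + j) + 1 := by omega
      rw [hg1, hg2, hn1, hn3]
      have hn5 : p.2 + k + (i + j) + 1 + 1 = p.2 + k + (i + j + 1) + 1 := by omega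
      rw [hn5]
      push_cast
      module
    all_goals simp [mulCl, mulCr, lieCr, hC]
  have tp : ∀ x y z : Lg,
      (2 : ℂ) • mul z ⁅x, y⁆ = ⁅mul z x, y⁆ + ⁅x, mul z y⁆ := by
    have tp1 : ∀ (i j : WhatIdx G) (z : Lg),
        (2 : ℂ) • mul z ⁅bas i, bas j⁆ = ⁅mul z (bas i), bas j⁆ + ⁅bas i, mul z (bas j)⁆ := by
      intro i j
      refine basis_ind bas (P := fun z =>
        (2 : ℂ) • mul z ⁅bas i, bas j⁆ = ⁅mul z (bas i), bas j⁆ + ⁅bas i, mul z (bas j)⁆)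
        (fun k => tp_bas i j k) ?_ ?_ ?_
      · simp
      · intro u v hu hv
        simp only [map_add, LinearMap.add_apply, add_lie, lie_add, smul_add, hu, hv]
        abel
      · intro c u hu
        simp only [map_smul, LinearMap.smul_apply, smul_lie, lie_smul]
        rw [smul_comm (2 : ℂ) c, hu, smul_add]
    have tp2 : ∀ (i : WhatIdx G) (y z : Lg),
        (2 : ℂ) • mul z ⁅bas i, y⁆ = ⁅mul z (bas i), y⁆ + ⁅bas i, mul z y⁆ := by
      intro i
      refine basis_ind bas (P := fun y => ∀ z,
        (2 : ℂ) • mul z ⁅bas i, y⁆ = ⁅mul z (bas i), y⁆ + ⁅bas i, mul z y⁆)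
        (fun j z => tp1 i j z) ?_ ?_ ?_
      · simp
      · intro u v hu hv z
        simp only [lie_add, map_add, smul_add, add_lie]
        rw [hu z, hv z]
        abel
      · intro c u hu z
        simp only [lie_smul, map_smul]
        rw [smul_comm (2 : ℂ) c, hu z, smul_add]
    intro x
    refine basis_ind bas (P := fun x => ∀ y z,
      (2 : ℂ) • mul z ⁅x, y⁆ = ⁅mul z x, y⁆ + ⁅x, mul z y⁆)
      (fun i y z => tp2 i y z) ?_ ?_ ?_ x
    · simp
    · intro u v hu hv y z
      simp only [add_lie, lie_add, map_add, smul_add]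
      rw [hu y z, hv y z]
      abel
    · intro c u hu y z
      simp only [smul_lie, lie_smul, map_smul]
      rw [smul_comm (2 : ℂ) c, hu y z, smul_add]
  refine ⟨comm, assoc, tp, ?_⟩
  -- failure of the Leibniz rule
  intro ha
  obtain ⟨p0, hp0⟩ := Finsupp.support_nonempty_iff.mpr ha
  have hS : (a.support.image Prod.snd).Nonempty := ⟨p0.2, Finset.mem_image_of_mem _ hp0⟩
  set N := (a.support.image Prod.snd).max' hS with hN
  obtain ⟨q, hq, hqN⟩ := Finset.mem_image.mp ((a.support.image Prod.snd).max'_mem hS)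
  have hmax : ∀ p ∈ a.support, p.2 ≤ N :=
    fun p hp => Finset.le_max' _ p.2 (Finset.mem_image_of_mem _ hp)
  refine ⟨bas (WhatIdx.L 0 0), bas (WhatIdx.L 0 0), bas (WhatIdx.L 0 0), ?_⟩
  simp only [lie_self, map_zero, LinearMap.zero_apply, zero_add, add_zero]
  intro hcontra
  have h0 : (bas.repr ⁅bas (WhatIdx.L 0 0),
      mul (bas (WhatIdx.L 0 0)) (bas (WhatIdx.L 0 0))⁆) (WhatIdx.L q.1 (N + 2)) =
      a q * ((N : ℂ) + 1) := by
    rw [hmulLL, Finsupp.sum, lie_sum']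
    simp only [lie_smul, hLL, map_sum, map_smul, map_add, Module.Basis.repr_self,
      Finset.sum_apply', Finsupp.smul_apply, Finsupp.add_apply, Finsupp.single_apply,
      smul_eq_mul, add_zero, zero_add, sub_zero, Nat.cast_zero, WhatIdx.L.injEq,
      reduceCtorEq, if_false, mul_zero]
    rw [Finset.sum_eq_single q]
    · rw [if_neg (by rintro ⟨-, h⟩; omega), if_pos ⟨rfl, by omega⟩]
      push_cast
      rw [hqN]
      ring
    · intro b hb hne
      rw [if_neg, if_neg]
      · ring
      · rintro ⟨h1, h2⟩
        exact hne (Prod.ext h1 (by omega))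
      · rintro ⟨h1, h2⟩
        have := hmax b hb
        omega
    · intro h; exact absurd hq h
  rw [hcontra] at h0
  simp only [map_zero, Finsupp.coe_zero, Pi.zero_apply] at h0
  have haq : a q ≠ 0 := Finsupp.mem_support_iff.mp hq
  have hN1 : (N : ℂ) + 1 ≠ 0 := by exact_mod_cast Nat.succ_ne_zero N
  exact haq (by
    rcases mul_eq_zero.mp h0.symm with h | h
    · exact h
    · exact absurd h hN1)
end
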